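/- arXiv:1611.00246 — 8 statements merged into one kernel-verified Lean document; each statement's English description precedes it below -/
import Mathlib

section
/- Each cycle of length at least 4 in a chordal graph has at least two nonconsecutive vertices each of which is opposite to a chord of the cycle; that is, there exist two vertices on the cycle which are not adjacent along the cycle such that, for each of them, the vertex immediately preceding it and the vertex immediately following it on the cycle are adjacent in the graph. -/
/-- The underlying graph of a digraph given by arc relation `A`. -/
def underlyingGraph {V : Type*} (A : V → V → Prop) : SimpleGraph V where
  Adj x y := x ≠ y ∧ (A x y ∨ A y x)
  symm := by
    constructor
    intro x y ⟨h, h'⟩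
    exact ⟨h.symm, h'.symm⟩
  loopless := by
    constructor
    intro x ⟨h, _⟩
    exact h rfl

/-- The competition graph of a digraph given by arc relation `A`. -/
def competitionGraph {V : Type*} (A : V → V → Prop) : SimpleGraph V where
  Adj x y := x ≠ y ∧ ∃ w, A x w ∧ A y w
  symm := by
    constructor
    intro x y ⟨h, w, h1, h2⟩
    exact ⟨h.symm, w, h2, h1⟩
  loopless := by
    constructor
    intro x ⟨h, _⟩
    exact h rfl

/-- The phylogeny graph of a digraph given by arc relation `A`. -/
def phylogenyGraph {V : Type*} (A : V → V → Prop) : SimpleGraph V :=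
  underlyingGraph A ⊔ competitionGraph A

/-- A `(i,j)` digraph: a (finite, simple) acyclic digraph in which every vertex has
indegree at most `i` and outdegree at most `j`. -/
def IsIJDigraph {V : Type*} (i j : ℕ) (A : V → V → Prop) : Prop :=
  (∀ v : V, ¬ Relation.TransGen A v v) ∧
  (∀ v : V, {u | A u v}.ncard ≤ i) ∧
  (∀ v : V, {u | A v u}.ncard ≤ j)

/-- An edge of the phylogeny graph is a *cared edge* if it belongs to the competition
graph but not to the underlying graph. -/
def CaredEdge {V : Type*} (A : V → V → Prop) (x y : V) : Prop :=
  (competitionGraph A).Adj x y ∧ ¬ (underlyingGraph A).Adj x y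

/-- A cycle in a graph is a *hole* if it has length at least `4` and is induced. -/
def IsHole {V : Type*} (G : SimpleGraph V) {v : V} (c : G.Walk v v) : Prop :=
  c.IsCycle ∧ 4 ≤ c.length ∧
    ∀ x ∈ c.support, ∀ y ∈ c.support, G.Adj x y → s(x, y) ∈ c.edges

/-- A graph is *chordal* if every cycle of length at least `4` has a chord, i.e.
the graph has no hole. -/
def IsChordal {V : Type*} (G : SimpleGraph V) : Prop :=
  ∀ (v : V) (c : G.Walk v v), c.IsCycle → 4 ≤ c.length →
    ∃ x ∈ c.support, ∃ y ∈ c.support, G.Adj x y ∧ s(x, y) ∉ c.edges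

section ChordalAux

open SimpleGraph

variable {V : Type*} {G : SimpleGraph V}

private lemma getVert_edge_mem {u v : V} (p : G.Walk u v) :
    ∀ k, k < p.length → s(p.getVert k, p.getVert (k + 1)) ∈ p.edges := by
  induction p with
  | nil => intro k hk; simp at hk
  | cons h q ih =>
    intro k hk
    cases k with
    | zero =>
      simp only [Walk.edges_cons, Walk.getVert_cons_succ, Walk.getVert_zero, List.mem_cons]
      left; trivial
    | succ k =>
      simp only [Walk.edges_cons, Walk.getVert_cons_succ, List.mem_cons]
      right
      exact ih k (by simpa using hk)

private lemma support_getElem?' {u v : V} (p : G.Walk u v) :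
    ∀ k, k ≤ p.length → p.support[k]? = some (p.getVert k) := by
  induction p with
  | nil =>
    intro k hk
    simp only [Walk.length_nil, Nat.le_zero] at hk
    subst hk
    simp [Walk.support_nil]
  | cons h q ih =>
    intro k hk
    cases k with
    | zero => simp [Walk.support_cons]
    | succ k =>
      simp only [Walk.support_cons, Walk.getVert_cons_succ, List.getElem?_cons_succ]
      exact ih k (by simpa using hk)

private lemma cycle_inj {u : V} {c : G.Walk u u} (hc : c.IsCycle) :
    ∀ x y, x < c.length → y < c.length → c.getVert x = c.getVert y → x = y := by
  have hnd := hc.support_nodup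
  have key : ∀ x y, 1 ≤ x → x ≤ c.length → 1 ≤ y → y ≤ c.length →
      c.getVert x = c.getVert y → x = y := by
    intro x y hx1 hx2 hy1 hy2 hxy
    have h1 : c.support.tail[x - 1]? = some (c.getVert x) := by
      rw [← List.drop_one, List.getElem?_drop, show 1 + (x - 1) = x by omega]
      exact support_getElem?' c x hx2
    have h2 : c.support.tail[y - 1]? = some (c.getVert y) := by
      rw [← List.drop_one, List.getElem?_drop, show 1 + (y - 1) = y by omega]
      exact support_getElem?' c y hy2
    rw [hxy] at h1
    obtain ⟨hlt, heq⟩ := List.getElem?_eq_some_iff.mp h2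
    obtain ⟨hlt', heq'⟩ := List.getElem?_eq_some_iff.mp h1
    have : x - 1 = y - 1 := hnd.getElem_inj_iff.mp (heq'.trans heq.symm)
    omega
  intro x y hx hy hxy
  have hlen0 : 0 < c.length := lt_of_le_of_lt (Nat.zero_le x) hx
  have hux : c.getVert 0 = c.getVert c.length := by
    rw [Walk.getVert_zero, Walk.getVert_length]
  rcases Nat.eq_zero_or_pos x with rfl | hx1
  · rcases Nat.eq_zero_or_pos y with rfl | hy1
    · rfl
    · exfalso
      have := key c.length y (by omega) le_rfl hy1 (by omega) (by rw [← hux, hxy])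
      omega
  · rcases Nat.eq_zero_or_pos y with rfl | hy1
    · exfalso
      have := key x c.length hx1 (by omega) (by omega) le_rfl (by rw [hxy, hux])
      omega
    · exact key x y hx1 (by omega) hy1 (by omega) hxy

private def walkOfFn (G : SimpleGraph V) (f : ℕ → V) :
    (m : ℕ) → (∀ k < m, G.Adj (f k) (f (k + 1))) → G.Walk (f 0) (f m)
  | 0, _ => Walk.nil
  | m + 1, h => Walk.cons (h 0 (Nat.succ_pos m))
      (walkOfFn G (fun k => f (k + 1)) m (fun k hk => h (k + 1) (by omega)))

private lemma walkOfFn_length :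
    ∀ (m : ℕ) (f : ℕ → V) (h : ∀ k < m, G.Adj (f k) (f (k + 1))),
      (walkOfFn G f m h).length = m := by
  intro m
  induction m with
  | zero => intro f h; rfl
  | succ m ih => intro f h; simp [walkOfFn, ih]

private lemma walkOfFn_support :
    ∀ (m : ℕ) (f : ℕ → V) (h : ∀ k < m, G.Adj (f k) (f (k + 1))),
      (walkOfFn G f m h).support = (List.range (m + 1)).map f := by
  intro m
  induction m with
  | zero => intro f h; simp [walkOfFn, List.range_succ]
  | succ m ih =>
    intro f h
    rw [walkOfFn, Walk.support_cons, ih, @List.range_succ_eq_map (m + 1), List.map_cons,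
      List.map_map]
    rfl

private lemma walkOfFn_edges :
    ∀ (m : ℕ) (f : ℕ → V) (h : ∀ k < m, G.Adj (f k) (f (k + 1))),
      (walkOfFn G f m h).edges = (List.range m).map (fun k => s(f k, f (k + 1))) := by
  intro m
  induction m with
  | zero => intro f h; simp [walkOfFn]
  | succ m ih =>
    intro f h
    rw [walkOfFn, Walk.edges_cons, ih, @List.range_succ_eq_map m, List.map_cons, List.map_map]
    rfl

private lemma opp
    (hG : ∀ (v : V) (c : G.Walk v v), c.IsCycle → 4 ≤ c.length →
      ∃ x ∈ c.support, ∃ y ∈ c.support, G.Adj x y ∧ s(x, y) ∉ c.edges)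
    (g : ℕ → V) (n : ℕ) (hn : 4 ≤ n)
    (hadj : ∀ k, G.Adj (g k) (g (k + 1)))
    (hinj : ∀ x y, g x = g y → x % n = y % n) :
    ∀ d, 2 ≤ d → d + 1 ≤ n → ∀ a, G.Adj (g a) (g (a + d)) →
      ∃ x, a < x ∧ x < a + d ∧ G.Adj (g (x - 1)) (g (x + 1)) := by
  have hg_cancel : ∀ (a s t : ℕ), s < n → t < n → g (a + s) = g (a + t) → s = t := by
    intro a s t hs ht hgeq
    have h1 : a + s ≡ a + t [MOD n] := hinj _ _ hgeq
    have h2 := Nat.ModEq.add_left_cancel' a h1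
    rwa [Nat.ModEq, Nat.mod_eq_of_lt hs, Nat.mod_eq_of_lt ht] at h2
  intro d
  induction d using Nat.strong_induction_on with
  | _ d IH =>
  intro hd2 hdn a hchord
  rcases Nat.lt_or_ge d 3 with hd3 | hd3
  · have hd : d = 2 := by omega
    subst hd
    refine ⟨a + 1, by omega, by omega, ?_⟩
    rw [Nat.add_sub_cancel, show a + 1 + 1 = a + 2 by omega]
    exact hchord
  · set m := d + 1 with hm
    have hm0 : 0 < m := by omega
    set f' : ℕ → V := fun k => g (a + k % m) with hf'
    have hf'lt : ∀ k, k ≤ d → f' k = g (a + k) := fun k hk => by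
      simp only [hf']; rw [Nat.mod_eq_of_lt (by omega)]
    have hf'm : f' m = g a := by simp only [hf']; rw [Nat.mod_self, Nat.add_zero]
    have h' : ∀ k < m, G.Adj (f' k) (f' (k + 1)) := by
      intro k hk
      rcases Nat.lt_or_ge k d with hlt | hge
      · rw [hf'lt k (by omega), hf'lt (k + 1) (by omega)]; exact hadj (a + k)
      · have hkd : k = d := by omega
        rw [hkd, hf'lt d le_rfl, show d + 1 = m from hm.symm, hf'm]
        exact hchord.symm
    have hcl : f' m = f' 0 := by rw [hf'm, hf'lt 0 (by omega), Nat.add_zero]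
    set w := (walkOfFn G f' m h').copy rfl hcl with hw
    have hwlen : w.length = m := by rw [hw, Walk.length_copy, walkOfFn_length]
    have hwsup : w.support = (List.range (m + 1)).map f' := by
      rw [hw, Walk.support_copy, walkOfFn_support]
    have hwedg : w.edges = (List.range m).map (fun k => s(f' k, f' (k + 1))) := by
      rw [hw, Walk.edges_copy, walkOfFn_edges]
    have hinj' : ∀ x y, 1 ≤ x → x ≤ m → 1 ≤ y → y ≤ m → f' x = f' y → x = y := by
      intro x y hx1 hxm hy1 hym heq
      have hmm := hg_cancel a (x % m) (y % m)
        (lt_of_lt_of_le (Nat.mod_lt x hm0) (by omega))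
        (lt_of_lt_of_le (Nat.mod_lt y hm0) (by omega)) heq
      have hxm' : x % m = x ∨ (x % m = 0 ∧ x = m) := by
        rcases Nat.lt_or_ge x m with h | h
        · exact Or.inl (Nat.mod_eq_of_lt h)
        · have hx : x = m := by omega
          exact Or.inr ⟨by rw [hx, Nat.mod_self], hx⟩
      have hym' : y % m = y ∨ (y % m = 0 ∧ y = m) := by
        rcases Nat.lt_or_ge y m with h | h
        · exact Or.inl (Nat.mod_eq_of_lt h)
        · have hy : y = m := by omega
          exact Or.inr ⟨by rw [hy, Nat.mod_self], hy⟩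
      rcases hxm' with hx | ⟨hx0, hxm2⟩ <;> rcases hym' with hy | ⟨hy0, hym2⟩
      · rw [hx, hy] at hmm; exact hmm
      · rw [hx, hy0] at hmm; omega
      · rw [hx0, hy] at hmm; omega
      · rw [hxm2, hym2]
    have hwcyc : w.IsCycle := by
      rw [Walk.isCycle_def]
      refine ⟨?_, ?_, ?_⟩
      · rw [Walk.isTrail_def, hwedg]
        refine List.Nodup.map_on ?_ (@List.nodup_range m)
        intro x hx y hy heq
        rw [List.mem_range] at hx hy
        rcases Sym2.eq_iff.mp heq with ⟨h1, h2⟩ | ⟨h1, h2⟩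
        · exact Nat.succ_injective
            (hinj' (x + 1) (y + 1) (by omega) (by omega) (by omega) (by omega) h2)
        · exfalso
          rcases Nat.eq_zero_or_pos x with rfl | hx1
          · have e1 : m = y + 1 := hinj' m (y + 1) (by omega) le_rfl (by omega) (by omega)
              (by rw [hcl]; exact h1)
            have e2 : (1 : ℕ) = y := by
              rcases Nat.eq_zero_or_pos y with rfl | hy1
              · have := hinj' 1 m (by omega) (by omega) (by omega) le_rfl
                  (by rw [hcl]; exact h2)
                omega
              · exact hinj' 1 y (by omega) (by omega) hy1 (by omega) h2
            omega
          · have e1 : x = y + 1 := hinj' x (y + 1) hx1 (by omega) (by omega) (by omega) h1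
            rcases Nat.eq_zero_or_pos y with rfl | hy1
            · have e2 : x + 1 = m := hinj' (x + 1) m (by omega) (by omega) (by omega) le_rfl
                (by rw [hcl]; exact h2)
              omega
            · have e2 : x + 1 = y := hinj' (x + 1) y (by omega) (by omega) hy1 (by omega) h2
              omega
      · intro hnil
        have h0 := congrArg Walk.length hnil
        rw [hwlen, Walk.length_nil] at h0
        omega
      · rw [hwsup, List.range_succ_eq_map, List.map_cons, List.tail_cons, List.map_map]
        refine List.Nodup.map_on ?_ (@List.nodup_range m)
        intro x hx y hy heq
        rw [List.mem_range] at hx hy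
        exact Nat.succ_injective
          (hinj' (x + 1) (y + 1) (by omega) (by omega) (by omega) (by omega) heq)
    obtain ⟨x, hxs, y, hys, hadjxy, hnedge⟩ := hG (f' 0) w hwcyc (by rw [hwlen]; omega)
    have hxidx : ∃ p < m, f' p = x := by
      rw [hwsup] at hxs
      obtain ⟨p, hp, hpe⟩ := List.mem_map.mp hxs
      rw [List.mem_range] at hp
      rcases Nat.lt_or_ge p m with h | h
      · exact ⟨p, h, hpe⟩
      · have hpm : p = m := by omega
        subst hpm
        exact ⟨0, by omega, by rw [← hcl]; exact hpe⟩
    have hyidx : ∃ q < m, f' q = y := by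
      rw [hwsup] at hys
      obtain ⟨q, hq, hqe⟩ := List.mem_map.mp hys
      rw [List.mem_range] at hq
      rcases Nat.lt_or_ge q m with h | h
      · exact ⟨q, h, hqe⟩
      · have hqm : q = m := by omega
        subst hqm
        exact ⟨0, by omega, by rw [← hcl]; exact hqe⟩
    obtain ⟨p, hp, hpe⟩ := hxidx
    obtain ⟨q, hq, hqe⟩ := hyidx
    have main : ∀ p q, p < q → q < m → G.Adj (f' p) (f' q) → s(f' p, f' q) ∉ w.edges →
        ∃ z, a < z ∧ z < a + d ∧ G.Adj (g (z - 1)) (g (z + 1)) := by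
      intro p q hpq hqm hadj' hne'
      rw [hwedg] at hne'
      have h2le : 2 ≤ q - p := by
        by_contra hcon
        have hq' : q = p + 1 := by omega
        exact hne' (List.mem_map.mpr ⟨p, List.mem_range.mpr (by omega), by rw [hq']⟩)
      have hub : q - p ≤ m - 2 := by
        by_contra hcon
        have hp0 : p = 0 := by omega
        have hq1 : q = m - 1 := by omega
        apply hne'
        refine List.mem_map.mpr ⟨m - 1, List.mem_range.mpr (by omega), ?_⟩
        rw [show m - 1 + 1 = m by omega, hcl, hp0, hq1, Sym2.eq_swap]
      have hchord2 : G.Adj (g (a + p)) (g (a + p + (q - p))) := by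
        rw [show a + p + (q - p) = a + q by omega, ← hf'lt p (by omega), ← hf'lt q (by omega)]
        exact hadj'
      obtain ⟨z, hz1, hz2, hz3⟩ := IH (q - p) (by omega) h2le (by omega) (a + p) hchord2
      exact ⟨z, by omega, by omega, hz3⟩
    rcases lt_trichotomy p q with h | h | h
    · exact main p q h hq (by rw [hpe, hqe]; exact hadjxy) (by rw [hpe, hqe]; exact hnedge)
    · exact absurd (by rw [← hpe, ← hqe, h] : x = y) hadjxy.ne
    · exact main q p h hp (by rw [hpe, hqe]; exact hadjxy.symm)
        (by rw [hpe, hqe, Sym2.eq_swap]; exact hnedge)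

end ChordalAux

section
open SimpleGraph
/-- Each cycle of length at least `4` in a chordal graph has at least two
nonconsecutive vertices each of which is opposite to a chord of the cycle:
there are two distinct, nonconsecutive positions `i`, `j` on the cycle such that
for each of them, the vertex immediately preceding it and the vertex immediately
following it on the cycle are adjacent in the graph. -/
theorem stmt_2 {V : Type*} (G : SimpleGraph V) (hG : IsChordal G)
    (v : V) (c : G.Walk v v) (hc : c.IsCycle) (hlen : 4 ≤ c.length) :
    ∃ i j, i < c.length ∧ j < c.length ∧
      c.getVert i ≠ c.getVert j ∧
      (i + 1) % c.length ≠ j ∧ (j + 1) % c.length ≠ i ∧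
      G.Adj (c.getVert ((i + c.length - 1) % c.length)) (c.getVert ((i + 1) % c.length)) ∧
      G.Adj (c.getVert ((j + c.length - 1) % c.length)) (c.getVert ((j + 1) % c.length)) := by
  have hG' : ∀ (v : V) (c : G.Walk v v), c.IsCycle → 4 ≤ c.length →
      ∃ x ∈ c.support, ∃ y ∈ c.support, G.Adj x y ∧ s(x, y) ∉ c.edges := hG
  set n := c.length with hn
  have hn4 : 4 ≤ n := hlen
  have hn0 : 0 < n := by omega
  set g : ℕ → V := fun k => c.getVert (k % n) with hg
  have hf0 : c.getVert n = c.getVert 0 := by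
    rw [Walk.getVert_zero, hn, Walk.getVert_length]
  have hinjf : ∀ a b, a < n → b < n → c.getVert a = c.getVert b → a = b := by
    intro a b ha hb
    exact cycle_inj hc a b (by omega) (by omega)
  have hadjg : ∀ k, G.Adj (g k) (g (k + 1)) := by
    intro k
    have hr : k % n < n := Nat.mod_lt k hn0
    simp only [hg]
    rcases Nat.lt_or_ge (k % n + 1) n with h | h
    · have he : (k + 1) % n = k % n + 1 := by rw [← Nat.mod_add_mod, Nat.mod_eq_of_lt h]
      rw [he]
      exact c.adj_getVert_succ (by omega)
    · have hreq : k % n = n - 1 := by omega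
      have he : (k + 1) % n = 0 := by
        rw [← Nat.mod_add_mod, hreq, show n - 1 + 1 = n by omega, Nat.mod_self]
      rw [he, hreq, ← hf0]
      have := c.adj_getVert_succ (show n - 1 < c.length by omega)
      rwa [show n - 1 + 1 = n by omega] at this
  have hinjg : ∀ x y, g x = g y → x % n = y % n := by
    intro x y h
    exact hinjf _ _ (Nat.mod_lt x hn0) (Nat.mod_lt y hn0) h
  obtain ⟨x0, hxs, y0, hys, hadjxy, hnedge⟩ := hG' v c hc hlen
  have hxidx : ∃ p < n, c.getVert p = x0 := by
    obtain ⟨p, hpe, hpl⟩ := Walk.mem_support_iff_exists_getVert.mp hxs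
    rw [← hn] at hpl
    rcases Nat.lt_or_ge p n with h | h
    · exact ⟨p, h, hpe⟩
    · have hpn : p = n := by omega
      subst hpn
      exact ⟨0, hn0, by rw [← hf0]; exact hpe⟩
  have hyidx : ∃ q < n, c.getVert q = y0 := by
    obtain ⟨q, hqe, hql⟩ := Walk.mem_support_iff_exists_getVert.mp hys
    rw [← hn] at hql
    rcases Nat.lt_or_ge q n with h | h
    · exact ⟨q, h, hqe⟩
    · have hqn : q = n := by omega
      subst hqn
      exact ⟨0, hn0, by rw [← hf0]; exact hqe⟩
  obtain ⟨p, hpn, hpe⟩ := hxidx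
  obtain ⟨q, hqn, hqe⟩ := hyidx
  have main2 : ∀ p q, p < q → q < n → G.Adj (c.getVert p) (c.getVert q) →
      s(c.getVert p, c.getVert q) ∉ c.edges →
      ∃ i j, i < n ∧ j < n ∧
        c.getVert i ≠ c.getVert j ∧
        (i + 1) % n ≠ j ∧ (j + 1) % n ≠ i ∧
        G.Adj (c.getVert ((i + n - 1) % n)) (c.getVert ((i + 1) % n)) ∧
        G.Adj (c.getVert ((j + n - 1) % n)) (c.getVert ((j + 1) % n)) := by
    intro p q hpq hqn' hadj' hne'
    have h2le : 2 ≤ q - p := by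
      by_contra hcon
      have hq' : q = p + 1 := by omega
      apply hne'
      have := getVert_edge_mem c p (show p < c.length by omega)
      rw [hq']
      exact this
    have hub : q - p ≤ n - 2 := by
      by_contra hcon
      have hp0 : p = 0 := by omega
      have hq1 : q = n - 1 := by omega
      apply hne'
      have hh := getVert_edge_mem c (n - 1) (show n - 1 < c.length by omega)
      rw [show n - 1 + 1 = n by omega, hf0] at hh
      rw [hp0, hq1, Sym2.eq_swap]
      exact hh
    have hchord1 : G.Adj (g p) (g (p + (q - p))) := by
      simp only [hg]
      rw [show p + (q - p) = q by omega, Nat.mod_eq_of_lt (by omega), Nat.mod_eq_of_lt hqn']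
      exact hadj'
    obtain ⟨x, hx1, hx2, hx3⟩ := opp hG' g n hn4 hadjg hinjg (q - p) h2le (by omega) p hchord1
    have hchord2 : G.Adj (g q) (g (q + (n - (q - p)))) := by
      simp only [hg]
      rw [show q + (n - (q - p)) = p + n by omega, Nat.add_mod_right,
        Nat.mod_eq_of_lt hqn', Nat.mod_eq_of_lt (show p < n by omega)]
      exact hadj'.symm
    obtain ⟨y, hy1, hy2, hy3⟩ :=
      opp hG' g n hn4 hadjg hinjg (n - (q - p)) (by omega) (by omega) q hchord2
    simp only [hg] at hx3 hy3
    have hy2' : y < p + n := by omega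
    have hxq : x < q := by omega
    have hmody : (y % n = y ∧ q < y ∧ y < n) ∨ (y % n = y - n ∧ n ≤ y ∧ y - n < p) := by
      rcases Nat.lt_or_ge y n with h | h
      · exact Or.inl ⟨Nat.mod_eq_of_lt h, hy1, h⟩
      · refine Or.inr ⟨?_, h, by omega⟩
        rw [Nat.mod_eq_sub_mod h, Nat.mod_eq_of_lt (by omega)]
    refine ⟨x, y % n, by omega, Nat.mod_lt y hn0, ?_, ?_, ?_, ?_, ?_⟩
    · intro heq
      have := hinjf x (y % n) (by omega) (Nat.mod_lt y hn0) heq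
      rcases hmody with ⟨h1, h2, h3⟩ | ⟨h1, h2, h3⟩ <;> omega
    · rw [Nat.mod_eq_of_lt (show x + 1 < n by omega)]
      rcases hmody with ⟨h1, h2, h3⟩ | ⟨h1, h2, h3⟩ <;> omega
    · rcases hmody with ⟨h1, h2, h3⟩ | ⟨h1, h2, h3⟩
      · rw [h1]
        rcases Nat.lt_or_ge (y + 1) n with h | h
        · rw [Nat.mod_eq_of_lt h]; omega
        · have : (y + 1) % n = 0 := by
            rw [show y + 1 = (y + 1 - n) + n by omega, Nat.add_mod_right,
              Nat.mod_eq_of_lt (by omega)]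
            omega
          rw [this]
          omega
      · rw [h1, Nat.mod_eq_of_lt (show y - n + 1 < n by omega)]
        omega
    · have e1 : (x + n - 1) % n = (x - 1) % n := by
        rw [show x + n - 1 = (x - 1) + n by omega, Nat.add_mod_right]
      rw [e1]
      exact hx3
    · have e1 : (y % n + n - 1) % n = (y - 1) % n := by
        rw [show y % n + n - 1 = y % n + (n - 1) by omega, Nat.mod_add_mod,
          show y + (n - 1) = (y - 1) + n by omega, Nat.add_mod_right]
      have e2 : (y % n + 1) % n = (y + 1) % n := by rw [Nat.mod_add_mod]
      rw [e1, e2]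
      exact hy3
  rcases lt_trichotomy p q with h | h | h
  · exact main2 p q h hqn (by rw [hpe, hqe]; exact hadjxy) (by rw [hpe, hqe]; exact hnedge)
  · exact absurd (by rw [← hpe, ← hqe, h] : x0 = y0) hadjxy.ne
  · exact main2 q p h hpn (by rw [hpe, hqe]; exact hadjxy.symm)
      (by rw [hpe, hqe, Sym2.eq_swap]; exact hnedge)
end
end

section
/- If a chordal graph in which every vertex has degree at most four contains a cycle of length 7, then it contains a W-configuration as a subgraph. -/
/-- The W-configuration: the graph on vertices `v₁, …, v₇` with `vᵢ` adjacent to `vⱼ`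
if and only if `i ≠ j` and `|i - j| ≤ 2`. -/
def WConfiguration : SimpleGraph (Fin 7) where
  Adj i j := i ≠ j ∧ i.val ≤ j.val + 2 ∧ j.val ≤ i.val + 2
  symm := by
    constructor
    intro i j ⟨h, h1, h2⟩
    exact ⟨h.symm, h2, h1⟩
  loopless := by
    constructor
    intro i ⟨h, _⟩
    exact h rfl

section Aux

variable {V : Type*} {G : SimpleGraph V}

lemma chord4 (hG : IsChordal G) {a b c d : V}
    (hab : G.Adj a b) (hbc : G.Adj b c) (hcd : G.Adj c d) (hda : G.Adj d a)
    (nac : a ≠ c) (nbd : b ≠ d) :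
    G.Adj a c ∨ G.Adj b d := by
  have hcyc : (SimpleGraph.Walk.cons hab (.cons hbc (.cons hcd (.cons hda .nil)))).IsCycle := by
    simp [SimpleGraph.Walk.isCycle_def, SimpleGraph.Walk.isTrail_def, hab.ne, hbc.ne, hcd.ne, hda.ne, hab.ne', hbc.ne', hcd.ne', hda.ne', nac, nbd, nac.symm, nbd.symm, Sym2.eq_iff]
  obtain ⟨x, hx, y, hy, hxy, hne⟩ := hG a _ hcyc (by simp)
  simp only [SimpleGraph.Walk.support_cons, SimpleGraph.Walk.support_nil,
    SimpleGraph.Walk.edges_cons, SimpleGraph.Walk.edges_nil, List.mem_cons,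
    List.not_mem_nil, or_false, List.mem_singleton] at hx hy hne
  rcases hx with rfl | rfl | rfl | rfl | rfl <;> rcases hy with rfl | rfl | rfl | rfl | rfl <;>
    first
      | exact absurd rfl hxy.ne
      | (exfalso; apply hne; simp [Sym2.eq_iff]; done)
      | exact Or.inl (hxy)
      | exact Or.inl (hxy.symm)
      | exact Or.inr (hxy)
      | exact Or.inr (hxy.symm)

lemma chord5 (hG : IsChordal G) {a b c d e : V}
    (hab : G.Adj a b) (hbc : G.Adj b c) (hcd : G.Adj c d) (hde : G.Adj d e) (hea : G.Adj e a)
    (nac : a ≠ c) (nad : a ≠ d) (nbd : b ≠ d) (nbe : b ≠ e) (nce : c ≠ e) :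
    G.Adj a c ∨ G.Adj a d ∨ G.Adj b d ∨ G.Adj b e ∨ G.Adj c e := by
  have hcyc : (SimpleGraph.Walk.cons hab (.cons hbc (.cons hcd (.cons hde (.cons hea .nil))))).IsCycle := by
    simp [SimpleGraph.Walk.isCycle_def, SimpleGraph.Walk.isTrail_def, hab.ne, hbc.ne, hcd.ne, hde.ne, hea.ne, hab.ne', hbc.ne', hcd.ne', hde.ne', hea.ne', nac, nad, nbd, nbe, nce, nac.symm, nad.symm, nbd.symm, nbe.symm, nce.symm, Sym2.eq_iff]
  obtain ⟨x, hx, y, hy, hxy, hne⟩ := hG a _ hcyc (by simp)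
  simp only [SimpleGraph.Walk.support_cons, SimpleGraph.Walk.support_nil,
    SimpleGraph.Walk.edges_cons, SimpleGraph.Walk.edges_nil, List.mem_cons,
    List.not_mem_nil, or_false, List.mem_singleton] at hx hy hne
  rcases hx with rfl | rfl | rfl | rfl | rfl | rfl <;> rcases hy with rfl | rfl | rfl | rfl | rfl | rfl <;>
    first
      | exact absurd rfl hxy.ne
      | (exfalso; apply hne; simp [Sym2.eq_iff]; done)
      | exact Or.inl (hxy)
      | exact Or.inl (hxy.symm)
      | exact Or.inr (Or.inl (hxy))
      | exact Or.inr (Or.inl (hxy.symm))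
      | exact Or.inr (Or.inr (Or.inl (hxy)))
      | exact Or.inr (Or.inr (Or.inl (hxy.symm)))
      | exact Or.inr (Or.inr (Or.inr (Or.inl (hxy))))
      | exact Or.inr (Or.inr (Or.inr (Or.inl (hxy.symm))))
      | exact Or.inr (Or.inr (Or.inr (Or.inr (hxy))))
      | exact Or.inr (Or.inr (Or.inr (Or.inr (hxy.symm))))

lemma chord6 (hG : IsChordal G) {a b c d e f : V}
    (hab : G.Adj a b) (hbc : G.Adj b c) (hcd : G.Adj c d) (hde : G.Adj d e) (hef : G.Adj e f) (hfa : G.Adj f a)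
    (nac : a ≠ c) (nad : a ≠ d) (nae : a ≠ e) (nbd : b ≠ d) (nbe : b ≠ e) (nbf : b ≠ f) (nce : c ≠ e) (ncf : c ≠ f) (ndf : d ≠ f) :
    G.Adj a c ∨ G.Adj a d ∨ G.Adj a e ∨ G.Adj b d ∨ G.Adj b e ∨ G.Adj b f ∨ G.Adj c e ∨ G.Adj c f ∨ G.Adj d f := by
  have hcyc : (SimpleGraph.Walk.cons hab (.cons hbc (.cons hcd (.cons hde (.cons hef (.cons hfa .nil)))))).IsCycle := by
    simp [SimpleGraph.Walk.isCycle_def, SimpleGraph.Walk.isTrail_def, hab.ne, hbc.ne, hcd.ne, hde.ne, hef.ne, hfa.ne, hab.ne', hbc.ne', hcd.ne', hde.ne', hef.ne', hfa.ne', nac, nad, nae, nbd, nbe, nbf, nce, ncf, ndf, nac.symm, nad.symm, nae.symm, nbd.symm, nbe.symm, nbf.symm, nce.symm, ncf.symm, ndf.symm, Sym2.eq_iff]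
  obtain ⟨x, hx, y, hy, hxy, hne⟩ := hG a _ hcyc (by simp)
  simp only [SimpleGraph.Walk.support_cons, SimpleGraph.Walk.support_nil,
    SimpleGraph.Walk.edges_cons, SimpleGraph.Walk.edges_nil, List.mem_cons,
    List.not_mem_nil, or_false, List.mem_singleton] at hx hy hne
  rcases hx with rfl | rfl | rfl | rfl | rfl | rfl | rfl <;> rcases hy with rfl | rfl | rfl | rfl | rfl | rfl | rfl <;>
    first
      | exact absurd rfl hxy.ne
      | (exfalso; apply hne; simp [Sym2.eq_iff]; done)
      | exact Or.inl (hxy)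
      | exact Or.inl (hxy.symm)
      | exact Or.inr (Or.inl (hxy))
      | exact Or.inr (Or.inl (hxy.symm))
      | exact Or.inr (Or.inr (Or.inl (hxy)))
      | exact Or.inr (Or.inr (Or.inl (hxy.symm)))
      | exact Or.inr (Or.inr (Or.inr (Or.inl (hxy))))
      | exact Or.inr (Or.inr (Or.inr (Or.inl (hxy.symm))))
      | exact Or.inr (Or.inr (Or.inr (Or.inr (Or.inl (hxy)))))
      | exact Or.inr (Or.inr (Or.inr (Or.inr (Or.inl (hxy.symm)))))
      | exact Or.inr (Or.inr (Or.inr (Or.inr (Or.inr (Or.inl (hxy))))))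
      | exact Or.inr (Or.inr (Or.inr (Or.inr (Or.inr (Or.inl (hxy.symm))))))
      | exact Or.inr (Or.inr (Or.inr (Or.inr (Or.inr (Or.inr (Or.inl (hxy)))))))
      | exact Or.inr (Or.inr (Or.inr (Or.inr (Or.inr (Or.inr (Or.inl (hxy.symm)))))))
      | exact Or.inr (Or.inr (Or.inr (Or.inr (Or.inr (Or.inr (Or.inr (Or.inl (hxy))))))))
      | exact Or.inr (Or.inr (Or.inr (Or.inr (Or.inr (Or.inr (Or.inr (Or.inl (hxy.symm))))))))
      | exact Or.inr (Or.inr (Or.inr (Or.inr (Or.inr (Or.inr (Or.inr (Or.inr (hxy))))))))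
      | exact Or.inr (Or.inr (Or.inr (Or.inr (Or.inr (Or.inr (Or.inr (Or.inr (hxy.symm))))))))

lemma chord7 (hG : IsChordal G) {a b c d e f g : V}
    (hab : G.Adj a b) (hbc : G.Adj b c) (hcd : G.Adj c d) (hde : G.Adj d e) (hef : G.Adj e f) (hfg : G.Adj f g) (hga : G.Adj g a)
    (nac : a ≠ c) (nad : a ≠ d) (nae : a ≠ e) (naf : a ≠ f) (nbd : b ≠ d) (nbe : b ≠ e) (nbf : b ≠ f) (nbg : b ≠ g) (nce : c ≠ e) (ncf : c ≠ f) (ncg : c ≠ g) (ndf : d ≠ f) (ndg : d ≠ g) (neg : e ≠ g) :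
    G.Adj a c ∨ G.Adj a d ∨ G.Adj a e ∨ G.Adj a f ∨ G.Adj b d ∨ G.Adj b e ∨ G.Adj b f ∨ G.Adj b g ∨ G.Adj c e ∨ G.Adj c f ∨ G.Adj c g ∨ G.Adj d f ∨ G.Adj d g ∨ G.Adj e g := by
  have hcyc : (SimpleGraph.Walk.cons hab (.cons hbc (.cons hcd (.cons hde (.cons hef (.cons hfg (.cons hga .nil))))))).IsCycle := by
    simp [SimpleGraph.Walk.isCycle_def, SimpleGraph.Walk.isTrail_def, hab.ne, hbc.ne, hcd.ne, hde.ne, hef.ne, hfg.ne, hga.ne, hab.ne', hbc.ne', hcd.ne', hde.ne', hef.ne', hfg.ne', hga.ne', nac, nad, nae, naf, nbd, nbe, nbf, nbg, nce, ncf, ncg, ndf, ndg, neg, nac.symm, nad.symm, nae.symm, naf.symm, nbd.symm, nbe.symm, nbf.symm, nbg.symm, nce.symm, ncf.symm, ncg.symm, ndf.symm, ndg.symm, neg.symm, Sym2.eq_iff]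
  obtain ⟨x, hx, y, hy, hxy, hne⟩ := hG a _ hcyc (by simp)
  simp only [SimpleGraph.Walk.support_cons, SimpleGraph.Walk.support_nil,
    SimpleGraph.Walk.edges_cons, SimpleGraph.Walk.edges_nil, List.mem_cons,
    List.not_mem_nil, or_false, List.mem_singleton] at hx hy hne
  rcases hx with rfl | rfl | rfl | rfl | rfl | rfl | rfl | rfl <;> rcases hy with rfl | rfl | rfl | rfl | rfl | rfl | rfl | rfl <;>
    first
      | exact absurd rfl hxy.ne
      | (exfalso; apply hne; simp [Sym2.eq_iff]; done)
      | exact Or.inl (hxy)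
      | exact Or.inl (hxy.symm)
      | exact Or.inr (Or.inl (hxy))
      | exact Or.inr (Or.inl (hxy.symm))
      | exact Or.inr (Or.inr (Or.inl (hxy)))
      | exact Or.inr (Or.inr (Or.inl (hxy.symm)))
      | exact Or.inr (Or.inr (Or.inr (Or.inl (hxy))))
      | exact Or.inr (Or.inr (Or.inr (Or.inl (hxy.symm))))
      | exact Or.inr (Or.inr (Or.inr (Or.inr (Or.inl (hxy)))))
      | exact Or.inr (Or.inr (Or.inr (Or.inr (Or.inl (hxy.symm)))))
      | exact Or.inr (Or.inr (Or.inr (Or.inr (Or.inr (Or.inl (hxy))))))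
      | exact Or.inr (Or.inr (Or.inr (Or.inr (Or.inr (Or.inl (hxy.symm))))))
      | exact Or.inr (Or.inr (Or.inr (Or.inr (Or.inr (Or.inr (Or.inl (hxy)))))))
      | exact Or.inr (Or.inr (Or.inr (Or.inr (Or.inr (Or.inr (Or.inl (hxy.symm)))))))
      | exact Or.inr (Or.inr (Or.inr (Or.inr (Or.inr (Or.inr (Or.inr (Or.inl (hxy))))))))
      | exact Or.inr (Or.inr (Or.inr (Or.inr (Or.inr (Or.inr (Or.inr (Or.inl (hxy.symm))))))))
      | exact Or.inr (Or.inr (Or.inr (Or.inr (Or.inr (Or.inr (Or.inr (Or.inr (Or.inl (hxy)))))))))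
      | exact Or.inr (Or.inr (Or.inr (Or.inr (Or.inr (Or.inr (Or.inr (Or.inr (Or.inl (hxy.symm)))))))))
      | exact Or.inr (Or.inr (Or.inr (Or.inr (Or.inr (Or.inr (Or.inr (Or.inr (Or.inr (Or.inl (hxy))))))))))
      | exact Or.inr (Or.inr (Or.inr (Or.inr (Or.inr (Or.inr (Or.inr (Or.inr (Or.inr (Or.inl (hxy.symm))))))))))
      | exact Or.inr (Or.inr (Or.inr (Or.inr (Or.inr (Or.inr (Or.inr (Or.inr (Or.inr (Or.inr (Or.inl (hxy)))))))))))
      | exact Or.inr (Or.inr (Or.inr (Or.inr (Or.inr (Or.inr (Or.inr (Or.inr (Or.inr (Or.inr (Or.inl (hxy.symm)))))))))))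
      | exact Or.inr (Or.inr (Or.inr (Or.inr (Or.inr (Or.inr (Or.inr (Or.inr (Or.inr (Or.inr (Or.inr (Or.inl (hxy))))))))))))
      | exact Or.inr (Or.inr (Or.inr (Or.inr (Or.inr (Or.inr (Or.inr (Or.inr (Or.inr (Or.inr (Or.inr (Or.inl (hxy.symm))))))))))))
      | exact Or.inr (Or.inr (Or.inr (Or.inr (Or.inr (Or.inr (Or.inr (Or.inr (Or.inr (Or.inr (Or.inr (Or.inr (Or.inl (hxy)))))))))))))
      | exact Or.inr (Or.inr (Or.inr (Or.inr (Or.inr (Or.inr (Or.inr (Or.inr (Or.inr (Or.inr (Or.inr (Or.inr (Or.inl (hxy.symm)))))))))))))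
      | exact Or.inr (Or.inr (Or.inr (Or.inr (Or.inr (Or.inr (Or.inr (Or.inr (Or.inr (Or.inr (Or.inr (Or.inr (Or.inr (hxy)))))))))))))
      | exact Or.inr (Or.inr (Or.inr (Or.inr (Or.inr (Or.inr (Or.inr (Or.inr (Or.inr (Or.inr (Or.inr (Or.inr (Or.inr (hxy.symm)))))))))))))



/-- Conclusion: `G` contains a W-configuration. -/
def WCond (G : SimpleGraph V) : Prop :=
  ∃ f : Fin 7 → V, Function.Injective f ∧
      ∀ i j : Fin 7, WConfiguration.Adj i j → G.Adj (f i) (f j)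

lemma deg5x [Fintype V] (hdeg : ∀ v : V, (G.neighborSet v).ncard ≤ 4)
    {x : Fin 7 → V} (hinj : Function.Injective x) {i a b c d e : Fin 7}
    (hd : a ≠ b ∧ a ≠ c ∧ a ≠ d ∧ a ≠ e ∧ b ≠ c ∧ b ≠ d ∧ b ≠ e ∧ c ≠ d ∧ c ≠ e ∧ d ≠ e)
    (h1 : G.Adj (x i) (x a)) (h2 : G.Adj (x i) (x b)) (h3 : G.Adj (x i) (x c))
    (h4 : G.Adj (x i) (x d)) (h5 : G.Adj (x i) (x e)) : False := by
  obtain ⟨d1, d2, d3, d4, d5, d6, d7, d8, d9, d10⟩ := hd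
  have hsub : ({x a, x b, x c, x d, x e} : Set V) ⊆ G.neighborSet (x i) := by
    intro z hz
    simp only [Set.mem_insert_iff, Set.mem_singleton_iff] at hz
    rcases hz with rfl | rfl | rfl | rfl | rfl <;> assumption
  have h5c : ({x a, x b, x c, x d, x e} : Set V).ncard = 5 := by
    rw [Set.ncard_insert_of_notMem (by simp [hinj.ne d1, hinj.ne d2, hinj.ne d3, hinj.ne d4]),
      Set.ncard_insert_of_notMem (by simp [hinj.ne d5, hinj.ne d6, hinj.ne d7]),
      Set.ncard_insert_of_notMem (by simp [hinj.ne d8, hinj.ne d9]),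
      Set.ncard_insert_of_notMem (by simp [hinj.ne d10]), Set.ncard_singleton]
  have hle := Set.ncard_le_ncard hsub (Set.toFinite _)
  have := hdeg (x i)
  omega

lemma leafW (x : Fin 7 → V) (hinj : Function.Injective x)
    (hadj : ∀ i : Fin 7, G.Adj (x i) (x (i + 1)))
    (h03 : G.Adj (x 0) (x 3)) (h04 : G.Adj (x 0) (x 4))
    (h46 : G.Adj (x 4) (x 6)) (h13 : G.Adj (x 1) (x 3)) : WCond G := by
  refine ⟨x ∘ ![5, 6, 4, 0, 3, 1, 2], hinj.comp (by decide), ?_⟩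
  intro i j hij
  fin_cases i <;> fin_cases j <;>
    first
    | exact absurd rfl hij.1
    | exact absurd hij.2.1 (by decide)
    | exact absurd hij.2.2 (by decide)
    | exact hadj 0 | exact (hadj 0).symm
    | exact hadj 1 | exact (hadj 1).symm
    | exact hadj 2 | exact (hadj 2).symm
    | exact hadj 3 | exact (hadj 3).symm
    | exact hadj 4 | exact (hadj 4).symm
    | exact hadj 5 | exact (hadj 5).symm
    | exact hadj 6 | exact (hadj 6).symm
    | exact h03 | exact h03.symm
    | exact h04 | exact h04.symm
    | exact h46 | exact h46.symm
    | exact h13 | exact h13.symm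

lemma lemA04 [Fintype V] (hG : IsChordal G) (hdeg : ∀ v : V, (G.neighborSet v).ncard ≤ 4)
    (x : Fin 7 → V) (hinj : Function.Injective x)
    (hadj : ∀ i : Fin 7, G.Adj (x i) (x (i + 1)))
    (h03 : G.Adj (x 0) (x 3)) (h04 : G.Adj (x 0) (x 4)) : WCond G := by
  rcases chord4 hG h04 (hadj 4) (hadj 5) (hadj 6)
      (hinj.ne (by decide)) (hinj.ne (by decide)) with h05 | h46
  · exact absurd h05 fun h05 =>
      deg5x hdeg hinj (i := 0) (by decide) (hadj 0) (hadj 6).symm h03 h04 h05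
  · rcases chord4 hG (hadj 0) (hadj 1) (hadj 2) h03.symm
        (hinj.ne (by decide)) (hinj.ne (by decide)) with h02 | h13
    · exact absurd h02 fun h02 =>
        deg5x hdeg hinj (i := 0) (by decide) (hadj 0) (hadj 6).symm h03 h04 h02
    · exact leafW x hinj hadj h03 h04 h46 h13

lemma lemA [Fintype V] (hG : IsChordal G) (hdeg : ∀ v : V, (G.neighborSet v).ncard ≤ 4)
    (x : Fin 7 → V) (hinj : Function.Injective x)
    (hadj : ∀ i : Fin 7, G.Adj (x i) (x (i + 1)))
    (h03 : G.Adj (x 0) (x 3)) : WCond G := by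
  -- reflection helpers
  have hinj' : Function.Injective (fun i : Fin 7 => x (3 - i)) := by
    intro i j h
    have := hinj h
    have e1 : (3 : Fin 7) - (3 - i) = i := sub_sub_cancel 3 i
    have e2 : (3 : Fin 7) - (3 - j) = j := sub_sub_cancel 3 j
    rw [← e1, ← e2, this]
  have hadj' : ∀ i : Fin 7, G.Adj (x (3 - i)) (x (3 - (i + 1))) := by
    intro i
    have h := (hadj (2 - i)).symm
    have e1 : (2 : Fin 7) - i + 1 = 3 - i := by clear h; revert i; decide
    have e2 : (3 : Fin 7) - (i + 1) = 2 - i := by clear h e1; revert i; decide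
    rw [e1] at h
    rw [e2]
    exact h
  rcases chord5 hG h03 (hadj 3) (hadj 4) (hadj 5) (hadj 6)
      (hinj.ne (by decide)) (hinj.ne (by decide)) (hinj.ne (by decide))
      (hinj.ne (by decide)) (hinj.ne (by decide)) with h04 | h05 | h35 | h36 | h46
  · exact lemA04 hG hdeg x hinj hadj h03 h04
  · rcases chord4 hG h03 (hadj 3) (hadj 4) h05.symm
        (hinj.ne (by decide)) (hinj.ne (by decide)) with h04 | h35
    · exact absurd h04 fun h04 =>
        deg5x hdeg hinj (i := 0) (by decide) (hadj 0) (hadj 6).symm h03 h05 h04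
    · rcases chord4 hG (hadj 0) (hadj 1) (hadj 2) h03.symm
          (hinj.ne (by decide)) (hinj.ne (by decide)) with h02 | h13
      · exact absurd h02 fun h02 =>
          deg5x hdeg hinj (i := 0) (by decide) (hadj 0) (hadj 6).symm h03 h05 h02
      · exact absurd h13 fun h13 =>
          deg5x hdeg hinj (i := 3) (by decide) (hadj 2).symm (hadj 3) h03.symm h35 h13.symm
  · rcases chord4 hG h03 h35 (hadj 5) (hadj 6)
        (hinj.ne (by decide)) (hinj.ne (by decide)) with h05 | h36
    · rcases chord4 hG (hadj 0) (hadj 1) (hadj 2) h03.symm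
          (hinj.ne (by decide)) (hinj.ne (by decide)) with h02 | h13
      · exact absurd h02 fun h02 =>
          deg5x hdeg hinj (i := 0) (by decide) (hadj 0) (hadj 6).symm h03 h05 h02
      · exact absurd h13 fun h13 =>
          deg5x hdeg hinj (i := 3) (by decide) (hadj 2).symm (hadj 3) h03.symm h35 h13.symm
    · exact absurd h36 fun h36 =>
        deg5x hdeg hinj (i := 3) (by decide) (hadj 2).symm (hadj 3) h03.symm h35 h36
  · exact lemA04 hG hdeg _ hinj' hadj' h03.symm h36
  · rcases chord4 hG h03 (hadj 3) h46 (hadj 6)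
        (hinj.ne (by decide)) (hinj.ne (by decide)) with h04 | h36
    · exact lemA04 hG hdeg x hinj hadj h03 h04
    · exact lemA04 hG hdeg _ hinj' hadj' h03.symm h36

lemma lemA_rot [Fintype V] (hG : IsChordal G) (hdeg : ∀ v : V, (G.neighborSet v).ncard ≤ 4)
    (x : Fin 7 → V) (hinj : Function.Injective x)
    (hadj : ∀ i : Fin 7, G.Adj (x i) (x (i + 1)))
    (k : Fin 7) (h : G.Adj (x k) (x (k + 3))) : WCond G := by
  refine lemA hG hdeg (fun i => x (i + k)) (hinj.comp (add_left_injective k)) ?_ ?_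
  · intro i
    show G.Adj (x (i + k)) (x (i + 1 + k))
    rw [add_right_comm]
    exact hadj (i + k)
  · show G.Adj (x (0 + k)) (x (3 + k))
    rw [zero_add, add_comm]
    exact h

lemma lemB [Fintype V] (hG : IsChordal G) (hdeg : ∀ v : V, (G.neighborSet v).ncard ≤ 4)
    (y : Fin 7 → V) (hinj2 : Function.Injective y)
    (hadj2 : ∀ i : Fin 7, G.Adj (y i) (y (i + 1)))
    (h02 : G.Adj (y 0) (y 2)) : WCond G := by
  rcases chord6 hG h02 (hadj2 2) (hadj2 3) (hadj2 4) (hadj2 5) (hadj2 6)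
      (hinj2.ne (by decide)) (hinj2.ne (by decide)) (hinj2.ne (by decide))
      (hinj2.ne (by decide)) (hinj2.ne (by decide)) (hinj2.ne (by decide))
      (hinj2.ne (by decide)) (hinj2.ne (by decide)) (hinj2.ne (by decide))
      with h03 | h04 | h05 | h24 | h25 | h26 | h35 | h36 | h46
  · exact lemA_rot hG hdeg y hinj2 hadj2 0 h03
  · exact lemA_rot hG hdeg y hinj2 hadj2 4 h04.symm
  · rcases chord5 hG h02 (hadj2 2) (hadj2 3) (hadj2 4) h05.symm
        (hinj2.ne (by decide)) (hinj2.ne (by decide)) (hinj2.ne (by decide))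
        (hinj2.ne (by decide)) (hinj2.ne (by decide)) with h03 | h04 | h24 | h25 | h35
    · exact lemA_rot hG hdeg y hinj2 hadj2 0 h03
    · exact lemA_rot hG hdeg y hinj2 hadj2 4 h04.symm
    · rcases chord4 hG h02 h24 (hadj2 4) h05.symm
          (hinj2.ne (by decide)) (hinj2.ne (by decide)) with h04 | h25
      · exact lemA_rot hG hdeg y hinj2 hadj2 4 h04.symm
      · exact lemA_rot hG hdeg y hinj2 hadj2 2 h25
    · exact lemA_rot hG hdeg y hinj2 hadj2 2 h25
    · rcases chord4 hG h02 (hadj2 2) h35 h05.symm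
          (hinj2.ne (by decide)) (hinj2.ne (by decide)) with h03 | h25
      · exact lemA_rot hG hdeg y hinj2 hadj2 0 h03
      · exact lemA_rot hG hdeg y hinj2 hadj2 2 h25
  · rcases chord5 hG h02 h24 (hadj2 4) (hadj2 5) (hadj2 6)
        (hinj2.ne (by decide)) (hinj2.ne (by decide)) (hinj2.ne (by decide))
        (hinj2.ne (by decide)) (hinj2.ne (by decide)) with h04 | h05 | h25 | h26 | h46
    · exact lemA_rot hG hdeg y hinj2 hadj2 4 h04.symm
    · rcases chord4 hG h02 h24 (hadj2 4) h05.symm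
          (hinj2.ne (by decide)) (hinj2.ne (by decide)) with h04 | h25
      · exact lemA_rot hG hdeg y hinj2 hadj2 4 h04.symm
      · exact lemA_rot hG hdeg y hinj2 hadj2 2 h25
    · exact lemA_rot hG hdeg y hinj2 hadj2 2 h25
    · exact lemA_rot hG hdeg y hinj2 hadj2 6 h26.symm
    · rcases chord4 hG h02 h24 h46 (hadj2 6)
          (hinj2.ne (by decide)) (hinj2.ne (by decide)) with h04 | h26
      · exact lemA_rot hG hdeg y hinj2 hadj2 4 h04.symm
      · exact lemA_rot hG hdeg y hinj2 hadj2 6 h26.symm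
  · exact lemA_rot hG hdeg y hinj2 hadj2 2 h25
  · exact lemA_rot hG hdeg y hinj2 hadj2 6 h26.symm
  · rcases chord5 hG h02 (hadj2 2) h35 (hadj2 5) (hadj2 6)
        (hinj2.ne (by decide)) (hinj2.ne (by decide)) (hinj2.ne (by decide))
        (hinj2.ne (by decide)) (hinj2.ne (by decide)) with h03 | h05 | h25 | h26 | h36
    · exact lemA_rot hG hdeg y hinj2 hadj2 0 h03
    · rcases chord4 hG h02 (hadj2 2) h35 h05.symm
          (hinj2.ne (by decide)) (hinj2.ne (by decide)) with h03 | h25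
      · exact lemA_rot hG hdeg y hinj2 hadj2 0 h03
      · exact lemA_rot hG hdeg y hinj2 hadj2 2 h25
    · exact lemA_rot hG hdeg y hinj2 hadj2 2 h25
    · exact lemA_rot hG hdeg y hinj2 hadj2 6 h26.symm
    · exact lemA_rot hG hdeg y hinj2 hadj2 3 h36
  · exact lemA_rot hG hdeg y hinj2 hadj2 3 h36
  · rcases chord5 hG h02 (hadj2 2) (hadj2 3) h46 (hadj2 6)
        (hinj2.ne (by decide)) (hinj2.ne (by decide)) (hinj2.ne (by decide))
        (hinj2.ne (by decide)) (hinj2.ne (by decide)) with h03 | h04 | h24 | h26 | h36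
    · exact lemA_rot hG hdeg y hinj2 hadj2 0 h03
    · exact lemA_rot hG hdeg y hinj2 hadj2 4 h04.symm
    · rcases chord4 hG h02 h24 h46 (hadj2 6)
          (hinj2.ne (by decide)) (hinj2.ne (by decide)) with h04 | h26
      · exact lemA_rot hG hdeg y hinj2 hadj2 4 h04.symm
      · exact lemA_rot hG hdeg y hinj2 hadj2 6 h26.symm
    · exact lemA_rot hG hdeg y hinj2 hadj2 6 h26.symm
    · exact lemA_rot hG hdeg y hinj2 hadj2 3 h36

lemma lemB_rot [Fintype V] (hG : IsChordal G) (hdeg : ∀ v : V, (G.neighborSet v).ncard ≤ 4)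
    (x : Fin 7 → V) (hinj : Function.Injective x)
    (hadj : ∀ i : Fin 7, G.Adj (x i) (x (i + 1)))
    (k : Fin 7) (h : G.Adj (x k) (x (k + 2))) : WCond G := by
  refine lemB hG hdeg (fun i => x (i + k)) (hinj.comp (add_left_injective k)) ?_ ?_
  · intro i
    show G.Adj (x (i + k)) (x (i + 1 + k))
    rw [add_right_comm]
    exact hadj (i + k)
  · show G.Adj (x (0 + k)) (x (2 + k))
    rw [zero_add, add_comm]
    exact h

lemma getVert_eq_support_getElem {u w : V} (p : G.Walk u w) (n : ℕ) (hn : n ≤ p.length) :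
    p.getVert n = p.support[n]'(by rw [SimpleGraph.Walk.length_support]; omega) := by
  induction p generalizing n with
  | nil =>
    simp only [SimpleGraph.Walk.length_nil, Nat.le_zero] at hn
    subst hn
    simp [SimpleGraph.Walk.getVert]
  | cons h p ih =>
    cases n with
    | zero => simp [SimpleGraph.Walk.getVert]
    | succ n =>
      simp only [SimpleGraph.Walk.support_cons, SimpleGraph.Walk.getVert_cons_succ,
        List.getElem_cons_succ]
      exact ih n (by simpa using hn)

end Aux

/-- If a chordal graph in which each vertex has degree at most four contains a cycle
of length `7`, then it contains a W-configuration as a subgraph. -/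
theorem stmt_3 {V : Type*} [Fintype V] (G : SimpleGraph V) (hG : IsChordal G)
    (hdeg : ∀ v : V, (G.neighborSet v).ncard ≤ 4)
    (v : V) (c : G.Walk v v) (hc : c.IsCycle) (hlen : c.length = 7) :
    ∃ f : Fin 7 → V, Function.Injective f ∧
      ∀ i j : Fin 7, WConfiguration.Adj i j → G.Adj (f i) (f j) := by
  have htl : c.support.tail.length = 7 := by
    rw [List.length_tail, SimpleGraph.Walk.length_support, hlen]
  obtain ⟨u, hu⟩ : ∃ u : Fin 7 → V, ∀ i : Fin 7,
      u i = c.support.tail[(i.val + 6) % 7]'(by rw [htl]; omega) :=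
    ⟨fun i => c.support.tail[(i.val + 6) % 7]'(by rw [htl]; omega), fun i => rfl⟩
  have gv : ∀ (n : ℕ) (h : n < 7), c.support.tail[n]'(by rw [htl]; exact h)
      = c.getVert (n + 1) := by
    intro n h
    rw [List.getElem_tail]
    exact (getVert_eq_support_getElem c (n + 1) (by omega)).symm
  have gv7 : c.getVert 7 = c.getVert 0 := by
    rw [show (7 : ℕ) = c.length from hlen.symm, SimpleGraph.Walk.getVert_length,
      SimpleGraph.Walk.getVert_zero]
  have hinj : Function.Injective u := by
    intro i j hij
    rw [hu i, hu j] at hij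
    have hnd : c.support.tail.Nodup := hc.support_nodup
    have := (hnd.getElem_inj_iff).mp hij
    have hi7 := i.isLt
    have hj7 := j.isLt
    ext
    omega
  have huv : ∀ i : Fin 7, u i = c.getVert i.val := by
    intro i
    rw [hu i, gv _ (by omega)]
    rcases Nat.eq_zero_or_pos i.val with h0 | hp
    · rw [h0]
      rw [show ((0 : ℕ) + 6) % 7 + 1 = 7 by norm_num, gv7]
    · congr 1
      have := i.isLt
      omega
  have hadj : ∀ i : Fin 7, G.Adj (u i) (u (i + 1)) := by
    intro i
    rw [huv, huv]
    have hval : ((i + 1 : Fin 7)).val = (i.val + 1) % 7 := by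
      simp [Fin.add_def]
    rw [hval]
    rcases Nat.lt_or_ge i.val 6 with h6 | h6
    · rw [show (i.val + 1) % 7 = i.val + 1 by omega]
      exact c.adj_getVert_succ (by omega)
    · have hi6 : i.val = 6 := by have := i.isLt; omega
      rw [hi6, show (6 + 1) % 7 = 0 by norm_num, ← gv7]
      exact c.adj_getVert_succ (by omega)
  have key : WCond G := by
    rcases chord7 hG (hadj 0) (hadj 1) (hadj 2) (hadj 3) (hadj 4) (hadj 5) (hadj 6)
        (hinj.ne (by decide)) (hinj.ne (by decide)) (hinj.ne (by decide))
        (hinj.ne (by decide)) (hinj.ne (by decide)) (hinj.ne (by decide))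
        (hinj.ne (by decide)) (hinj.ne (by decide)) (hinj.ne (by decide))
        (hinj.ne (by decide)) (hinj.ne (by decide)) (hinj.ne (by decide))
        (hinj.ne (by decide)) (hinj.ne (by decide))
        with h | h | h | h | h | h | h | h | h | h | h | h | h | h
    · exact lemB_rot hG hdeg u hinj hadj 0 h
    · exact lemA_rot hG hdeg u hinj hadj 0 h
    · exact lemA_rot hG hdeg u hinj hadj 4 h.symm
    · exact lemB_rot hG hdeg u hinj hadj 5 h.symm
    · exact lemB_rot hG hdeg u hinj hadj 1 h
    · exact lemA_rot hG hdeg u hinj hadj 1 h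
    · exact lemA_rot hG hdeg u hinj hadj 5 h.symm
    · exact lemB_rot hG hdeg u hinj hadj 6 h.symm
    · exact lemB_rot hG hdeg u hinj hadj 2 h
    · exact lemA_rot hG hdeg u hinj hadj 2 h
    · exact lemA_rot hG hdeg u hinj hadj 6 h.symm
    · exact lemB_rot hG hdeg u hinj hadj 3 h
    · exact lemA_rot hG hdeg u hinj hadj 3 h
    · exact lemB_rot hG hdeg u hinj hadj 4 h
  exact key
end

section
/- Let D be an (i,j) digraph. Then no vertex of D is incident to more than i(i-1)j/2 distinct cared edges in the phylogeny graph of D. -/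
lemma caredEdge_symm {V : Type*} {A : V → V → Prop} {x y : V}
    (h : CaredEdge A x y) : CaredEdge A y x :=
  ⟨(competitionGraph A).adj_symm h.1, fun h' => h.2 ((underlyingGraph A).adj_symm h')⟩

/-- In an `(i,j)` digraph `D`, no vertex is incident to more than `i(i-1)j/2`
distinct cared edges of the phylogeny graph of `D`. -/
theorem stmt_6 {V : Type*} [Fintype V] (i j : ℕ) (A : V → V → Prop)
    (hD : IsIJDigraph i j A) (v : V) :
    {e : Sym2 V | v ∈ e ∧ ∃ x y : V, e = s(x, y) ∧ CaredEdge A x y}.ncard ≤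
      i * (i - 1) * j / 2 := by
  classical
  set S : Set (Sym2 V) :=
    {e : Sym2 V | v ∈ e ∧ ∃ x y : V, e = s(x, y) ∧ CaredEdge A x y} with hSdef
  rcases S.eq_empty_or_nonempty with hS | hS
  · simp [hS]
  -- From a cared edge, deduce 2 ≤ i
  obtain ⟨e, he⟩ := hS
  obtain ⟨-, x, y, -, ⟨hxy, w, hxw, hyw⟩, -⟩ := he
  have hi2 : 2 ≤ i := by
    have hsub : {x, y} ⊆ {u | A u w} := by
      intro u hu
      rcases hu with rfl | rfl
      · exact hxw
      · exact hyw
    have h2 : ({x, y} : Set V).ncard = 2 := Set.ncard_pair hxy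
    calc 2 = ({x, y} : Set V).ncard := h2.symm
      _ ≤ {u | A u w}.ncard := Set.ncard_le_ncard hsub (Set.toFinite _)
      _ ≤ i := hD.2.1 w
  -- Reduce S to the set of other endpoints
  set U : Set V := {u | CaredEdge A v u} with hUdef
  have hSU : S = (fun u => s(v, u)) '' U := by
    ext e
    constructor
    · rintro ⟨hv, x, y, rfl, hc⟩
      rcases Sym2.mem_iff.mp hv with rfl | rfl
      · exact ⟨y, hc, rfl⟩
      · exact ⟨x, caredEdge_symm hc, Sym2.eq_swap⟩
    · rintro ⟨u, hu, rfl⟩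
      exact ⟨Sym2.mem_mk_left v u, v, u, rfl, hu⟩
  have hcard : S.ncard = U.ncard := by
    rw [hSU]
    exact Set.ncard_image_of_injOn (fun a _ b _ h => Sym2.congr_right.mp h)
  -- Bound U.ncard by (i-1) * j via the out-neighbors of v
  set N : Set V := {w | A v w} with hNdef
  have hUsub : U ⊆ ⋃ w ∈ N, ({u | A u w} \ {v}) := by
    rintro u ⟨⟨hne, w', hvw', huw'⟩, -⟩
    exact Set.mem_biUnion hvw' ⟨huw', fun h => hne (h.symm)⟩
  have hUcard : U.ncard ≤ j * (i - 1) := by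
    have hfin : ∀ s : Set V, s.Finite := fun s => s.toFinite
    have h1 : U.toFinset ⊆ N.toFinset.biUnion
        (fun w => ({u | A u w} \ {v}).toFinset) := by
      intro u hu
      rw [Set.mem_toFinset] at hu
      obtain ⟨w, hw, hu'⟩ := Set.mem_iUnion₂.mp (hUsub hu)
      exact Finset.mem_biUnion.mpr ⟨w, Set.mem_toFinset.mpr hw, Set.mem_toFinset.mpr hu'⟩
    have h2 : ∀ w ∈ N.toFinset, ({u | A u w} \ {v}).toFinset.card ≤ i - 1 := by
      intro w hw
      rw [Set.mem_toFinset] at hw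
      rw [← Set.ncard_eq_toFinset_card']
      have : ({u | A u w} \ {v}).ncard = {u | A u w}.ncard - 1 :=
        Set.ncard_diff_singleton_of_mem (s := {u | A u w}) hw
      rw [this]
      exact Nat.sub_le_sub_right (hD.2.1 w) 1
    calc U.ncard = U.toFinset.card := Set.ncard_eq_toFinset_card' U
      _ ≤ (N.toFinset.biUnion (fun w => ({u | A u w} \ {v}).toFinset)).card :=
          Finset.card_le_card h1
      _ ≤ ∑ w ∈ N.toFinset, ({u | A u w} \ {v}).toFinset.card :=
          Finset.card_biUnion_le
      _ ≤ ∑ _w ∈ N.toFinset, (i - 1) := Finset.sum_le_sum h2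
      _ = N.toFinset.card * (i - 1) := by rw [Finset.sum_const, smul_eq_mul]
      _ ≤ j * (i - 1) := by
          apply Nat.mul_le_mul_right
          rw [← Set.ncard_eq_toFinset_card']
          exact hD.2.2 v
  rw [hcard]
  refine hUcard.trans ?_
  rw [Nat.le_div_iff_mul_le (by norm_num)]
  calc j * (i - 1) * 2 = 2 * (i - 1) * j := by ring
    _ ≤ i * (i - 1) * j := by
        exact Nat.mul_le_mul_right _ (Nat.mul_le_mul_right _ hi2)
end

section
/- Let D be a (2,2) digraph. Then no vertex of D is incident to three or more cared edges in the phylogeny graph of D. -/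
/-- In a `(2,2)` digraph `D`, no vertex is incident to three or more cared edges of
the phylogeny graph of `D`. -/
theorem stmt_7 {V : Type*} [Fintype V] (A : V → V → Prop)
    (hD : IsIJDigraph 2 2 A) (v : V) :
    {e : Sym2 V | v ∈ e ∧ ∃ x y : V, e = s(x, y) ∧ CaredEdge A x y}.ncard ≤ 2 := by
  classical
  obtain ⟨-, hin, hout⟩ := hD
  set Y := {y : V | ∃ w, A v w ∧ A y w ∧ y ≠ v} with hYdef
  have hSsub : {e : Sym2 V | v ∈ e ∧ ∃ x y : V, e = s(x, y) ∧ CaredEdge A x y} ⊆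
      (fun y => s(v, y)) '' Y := by
    rintro e ⟨hv, x, y, rfl, ⟨⟨hne, w, hxw, hyw⟩, -⟩⟩
    rcases Sym2.mem_iff.mp hv with rfl | rfl
    · exact ⟨y, ⟨w, hxw, hyw, fun h => hne h.symm⟩, rfl⟩
    · exact ⟨x, ⟨w, hyw, hxw, hne⟩, by rw [Sym2.eq_swap]⟩
  have hYfin : Y.Finite := Set.toFinite _
  have hY2 : Y.ncard ≤ 2 := by
    set f : V → V := fun y =>
      if h : ∃ w, A v w ∧ A y w then h.choose else y with hfdef
    have hmaps : ∀ y ∈ Y, f y ∈ {w | A v w} := by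
      rintro y ⟨w, hvw, hyw, -⟩
      have h : ∃ w, A v w ∧ A y w := ⟨w, hvw, hyw⟩
      simp only [hfdef, dif_pos h]
      exact h.choose_spec.1
    have harc : ∀ y ∈ Y, A y (f y) := by
      rintro y ⟨w, hvw, hyw, -⟩
      have h : ∃ w, A v w ∧ A y w := ⟨w, hvw, hyw⟩
      simp only [hfdef, dif_pos h]
      exact h.choose_spec.2
    have hinj : Set.InjOn f Y := by
      intro y1 hy1 y2 hy2 heq
      have hn1 : y1 ≠ v := hy1.choose_spec.2.2
      have hn2 : y2 ≠ v := hy2.choose_spec.2.2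
      by_contra hne
      set w := f y1 with hw
      have h1 : A y1 w := harc y1 hy1
      have h2 : A y2 w := heq ▸ harc y2 hy2
      have hvw : A v w := hmaps y1 hy1
      have hsub : ({v, y1, y2} : Set V) ⊆ {u | A u w} := by
        rintro u (rfl | rfl | rfl) <;> assumption
      have h3 : ({v, y1, y2} : Set V).ncard = 3 := by
        rw [Set.ncard_insert_of_notMem (by
          simp only [Set.mem_insert_iff, Set.mem_singleton_iff]
          push_neg
          exact ⟨fun h => hn1 h.symm, fun h => hn2 h.symm⟩)
          (Set.toFinite _), Set.ncard_pair hne]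
      have := Set.ncard_le_ncard hsub (Set.toFinite _)
      have := hin w
      omega
    calc Y.ncard ≤ {w | A v w}.ncard :=
          Set.ncard_le_ncard_of_injOn f hmaps hinj (Set.toFinite _)
      _ ≤ 2 := hout v
  calc {e : Sym2 V | v ∈ e ∧ ∃ x y : V, e = s(x, y) ∧ CaredEdge A x y}.ncard
      ≤ ((fun y => s(v, y)) '' Y).ncard := Set.ncard_le_ncard hSsub (Set.toFinite _)
    _ ≤ Y.ncard := Set.ncard_image_le hYfin
    _ ≤ 2 := hY2
end

section
/- For any (2,2) digraph D, the phylogeny graph of D is K_5-free; that is, P(D) contains no five pairwise adjacent vertices. -/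
set_option linter.unusedSectionVars false

section Aux
variable {V : Type*} [Fintype V] {A : V → V → Prop}

lemma card3_lemma {s : Set V} {a b c : V} (ha : a ∈ s) (hb : b ∈ s) (hc : c ∈ s)
    (hab : a ≠ b) (hac : a ≠ c) (hbc : b ≠ c) (h : s.ncard ≤ 2) : False := by
  have hsub : ({a, b, c} : Set V) ⊆ s := by
    intro x hx
    simp only [Set.mem_insert_iff, Set.mem_singleton_iff] at hx
    rcases hx with rfl | rfl | rfl <;> assumption
  have h3 : ({a, b, c} : Set V).ncard = 3 := by
    rw [Set.ncard_insert_of_notMem (by simp [hab, hac]), Set.ncard_pair hbc]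
  have := Set.ncard_le_ncard hsub (Set.toFinite s)
  omega

lemma indeg3 (hD : IsIJDigraph 2 2 A) {v a b c : V} (h1 : A a v) (h2 : A b v) (h3 : A c v)
    (hab : a ≠ b) (hac : a ≠ c) (hbc : b ≠ c) : False :=
  card3_lemma (s := {u | A u v}) h1 h2 h3 hab hac hbc (hD.2.1 v)

lemma outdeg3 (hD : IsIJDigraph 2 2 A) {v a b c : V} (h1 : A v a) (h2 : A v b) (h3 : A v c)
    (hab : a ≠ b) (hac : a ≠ c) (hbc : b ≠ c) : False :=
  card3_lemma (s := {u | A v u}) h1 h2 h3 hab hac hbc (hD.2.2 v)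

lemma no2 (hD : IsIJDigraph 2 2 A) {a b : V} (h1 : A a b) (h2 : A b a) : False :=
  hD.1 a ((Relation.TransGen.single h1).tail h2)

lemma no3 (hD : IsIJDigraph 2 2 A) {a b c : V} (h1 : A a b) (h2 : A b c) (h3 : A c a) : False :=
  hD.1 a (((Relation.TransGen.single h1).tail h2).tail h3)

lemma adj_unfold {x y : V} (h : (phylogenyGraph A).Adj x y) :
    A x y ∨ A y x ∨ ∃ w, A x w ∧ A y w := by
  rcases h with ⟨_, h⟩ | ⟨_, w, h1, h2⟩
  · tauto
  · exact Or.inr (Or.inr ⟨w, h1, h2⟩)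


lemma final (hD : IsIJDigraph 2 2 A) {m M x y b : V}
    (hmx : m ≠ x) (hmy : m ≠ y) (hmb : m ≠ b) (hmM : m ≠ M)
    (hxy : x ≠ y) (hxb : x ≠ b) (hxM : x ≠ M) (hyb : y ≠ b) (hyM : y ≠ M) (hbM : b ≠ M)
    (eyM : A y M ∨ A M y ∨ ∃ w, A y w ∧ A M w)
    (exy : A x y ∨ A y x ∨ ∃ w, A x w ∧ A y w)
    (exb : A x b ∨ A b x ∨ ∃ w, A x w ∧ A b w)
    (hMy : ¬ A M y) (hMb : ¬ A M b) (hMx : ¬ A M x)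
    (h1 : A m M) (h2 : A x M) (h3 : A m b) (h4 : A y b) : False := by
  have indM : ∀ z, A z M → z = m ∨ z = x := by
    intro z hz
    by_contra hc
    push_neg at hc
    exact indeg3 hD h1 h2 hz hmx (Ne.symm hc.1) (Ne.symm hc.2)
  have indb : ∀ z, A z b → z = m ∨ z = y := by
    intro z hz
    by_contra hc
    push_neg at hc
    exact indeg3 hD h3 h4 hz hmy (Ne.symm hc.1) (Ne.symm hc.2)
  obtain ⟨wy, hywy, hMwy⟩ : ∃ w, A y w ∧ A M w := by
    rcases eyM with h | h | h
    · rcases indM y h with h' | h'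
      · exact absurd h'.symm hmy
      · exact absurd h'.symm hxy
    · exact absurd h hMy
    · exact h
  have hwyb : wy ≠ b := fun h => hMb (h ▸ hMwy)
  have hwyx : wy ≠ x := fun h => hMx (h ▸ hMwy)
  have outy : ∀ w, A y w → w = b ∨ w = wy := by
    intro w hw
    by_contra hc
    push_neg at hc
    exact outdeg3 hD h4 hywy hw (Ne.symm hwyb) (Ne.symm hc.1) (Ne.symm hc.2)
  have indwy : ∀ z, A z wy → z = y ∨ z = M := by
    intro z hz
    by_contra hc
    push_neg at hc
    exact indeg3 hD hywy hMwy hz hyM (Ne.symm hc.1) (Ne.symm hc.2)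
  have haxy : A x y := by
    rcases exy with h | h | ⟨w, hxw, hyw⟩
    · exact h
    · rcases outy x h with h' | h'
      · exact absurd h' hxb
      · exact absurd h'.symm hwyx
    · rcases outy w hyw with rfl | rfl
      · rcases indb x hxw with h' | h'
        · exact (hmx h'.symm).elim
        · exact (hxy h').elim
      · rcases indwy x hxw with h' | h'
        · exact (hxy h').elim
        · exact (hxM h').elim
  have outx : ∀ w, A x w → w = M ∨ w = y := by
    intro w hw
    by_contra hc
    push_neg at hc
    exact outdeg3 hD h2 haxy hw (Ne.symm hyM) (Ne.symm hc.1) (Ne.symm hc.2)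
  rcases exb with h | h | ⟨w, hxw, hbw⟩
  · rcases indb x h with h' | h'
    · exact hmx h'.symm
    · exact hxy h'
  · exact no3 hD h haxy h4
  · rcases outx w hxw with rfl | rfl
    · rcases indM b hbw with h' | h'
      · exact hmb h'.symm
      · exact hxb h'.symm
    · exact no2 hD h4 hbw
lemma core (hD : IsIJDigraph 2 2 A) {m M c d e : V}
    (hmM : m ≠ M) (hmc : m ≠ c) (hmd : m ≠ d) (hme : m ≠ e)
    (hMc : M ≠ c) (hMd : M ≠ d) (hMe : M ≠ e)
    (hcd : c ≠ d) (hce : c ≠ e) (hde : d ≠ e)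
    (hadj : ∀ p ∈ ([m, M, c, d, e] : List V), ∀ q ∈ ([m, M, c, d, e] : List V),
      p ≠ q → A p q ∨ A q p ∨ ∃ w, A p w ∧ A q w)
    (hmin : ∀ z ∈ ([M, c, d, e] : List V), ¬ A z m)
    (hmax : ∀ z ∈ ([m, c, d, e] : List V), ¬ A M z) : False := by
  -- covering of the edges from m
  have cov : ∀ z ∈ ([M, c, d, e] : List V), m ≠ z → ∃ w, A m w ∧ (w = z ∨ A z w) := by
    intro z hz hmz
    have hz' : z ∈ ([m, M, c, d, e] : List V) := by simp at hz ⊢; tauto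
    rcases hadj m (by simp) z hz' hmz with h | h | ⟨w, h1, h2⟩
    · exact ⟨z, h, Or.inl rfl⟩
    · exact absurd h (hmin z hz)
    · exact ⟨w, h1, Or.inr h2⟩
  obtain ⟨wM, amwM, hwM⟩ := cov M (by simp) hmM
  obtain ⟨wc, amwc, hwc⟩ := cov c (by simp) hmc
  obtain ⟨wd, amwd, hwd⟩ := cov d (by simp) hmd
  obtain ⟨we, amwe, hwe⟩ := cov e (by simp) hme
  have pairlem : ∀ z1 z2 w, z1 ≠ z2 → m ≠ z1 → m ≠ z2 → A m w →
      (w = z1 ∨ A z1 w) → (w = z2 ∨ A z2 w) →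
      (w = z1 ∧ A z2 z1) ∨ (w = z2 ∧ A z1 z2) := by
    intro z1 z2 w h12 hm1 hm2 hmw c1 c2
    rcases c1 with h1 | a1
    · rcases c2 with h2 | a2
      · exact absurd (h1.symm.trans h2) h12
      · exact Or.inl ⟨h1, h1 ▸ a2⟩
    · rcases c2 with h2 | a2
      · exact Or.inr ⟨h2, h2 ▸ a1⟩
      · exact (indeg3 hD hmw a1 a2 hm1 hm2 h12).elim
  have triplelem : ∀ z1 z2 z3 w, z1 ≠ z2 → z1 ≠ z3 → z2 ≠ z3 →
      m ≠ z1 → m ≠ z2 → m ≠ z3 → A m w →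
      (w = z1 ∨ A z1 w) → (w = z2 ∨ A z2 w) → (w = z3 ∨ A z3 w) → False := by
    intro z1 z2 z3 w h12 h13 h23 hm1 hm2 hm3 hmw c1 c2 c3
    rcases pairlem z1 z2 w h12 hm1 hm2 hmw c1 c2 with ⟨e1, a21⟩ | ⟨e2, a12⟩
    · rcases pairlem z1 z3 w h13 hm1 hm3 hmw c1 c3 with ⟨_, a31⟩ | ⟨e3, _⟩
      · exact indeg3 hD (e1 ▸ hmw) a21 a31 hm2 hm3 h23
      · exact h13 (e1.symm.trans e3)
    · rcases pairlem z2 z3 w h23 hm2 hm3 hmw c2 c3 with ⟨_, a32⟩ | ⟨e3, a23⟩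
      · exact indeg3 hD (e2 ▸ hmw) a12 a32 hm1 hm3 h13
      · rcases pairlem z1 z3 w h13 hm1 hm3 hmw c1 c3 with ⟨e1, _⟩ | ⟨_, a13⟩
        · exact h13 (e1.symm.trans e3)
        · exact indeg3 hD (e3 ▸ hmw) a13 a23 hm1 hm2 h12
  have Mfiber : ∀ z wz, m ≠ z → M ≠ z → ¬ A M z → A m wz → (wz = z ∨ A z wz) →
      wM = wz → wM = M ∧ A z M := by
    intro z wz hmz hMz hMAz _ cz heq
    have cz' : wM = z ∨ A z wM := by rw [heq]; exact cz
    rcases pairlem M z wM hMz hmM hmz amwM hwM cz' with ⟨e1, a1⟩ | ⟨e2, a2⟩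
    · exact ⟨e1, a1⟩
    · exact absurd (e2 ▸ a2) hMAz
  -- the concluding call
  have concl : ∀ x' y' b', x' ∈ ([c, d, e] : List V) → y' ∈ ([c, d, e] : List V) →
      b' ∈ ([c, d, e] : List V) → x' ≠ y' → x' ≠ b' → y' ≠ b' →
      A m M → A x' M → A m b' → A y' b' → False := by
    intro x' y' b' hx hy hb hxy hxb hyb hamM haxM hamb hayb
    have hmem : ∀ z ∈ ([c, d, e] : List V),
        m ≠ z ∧ z ≠ M ∧ ¬ A M z ∧ z ∈ ([m, M, c, d, e] : List V) := by
      intro z hz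
      simp only [List.mem_cons, List.mem_singleton, List.not_mem_nil, or_false] at hz
      rcases hz with rfl | rfl | rfl
      · exact ⟨hmc, Ne.symm hMc, hmax z (by simp), by simp⟩
      · exact ⟨hmd, Ne.symm hMd, hmax z (by simp), by simp⟩
      · exact ⟨hme, Ne.symm hMe, hmax z (by simp), by simp⟩
    obtain ⟨hx1, hx2, hx3, hx4⟩ := hmem x' hx
    obtain ⟨hy1, hy2, hy3, hy4⟩ := hmem y' hy
    obtain ⟨hb1, hb2, hb3, hb4⟩ := hmem b' hb
    exact final hD hx1 hy1 hb1 hmM hxy hxb hx2 hyb hy2 hb2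
      (hadj y' hy4 M (by simp) hy2) (hadj x' hx4 y' hy4 hxy) (hadj x' hx4 b' hb4 hxb)
      hy3 hb3 hx3 hamM haxM hamb hayb
  -- pigeonhole case analysis
  by_cases e1 : wM = wc
  · obtain ⟨eM, axM⟩ := Mfiber c wc hmc hMc (hmax c (by simp)) amwc hwc e1
    have hamM : A m M := eM ▸ amwM
    by_cases e2 : wd = we
    · rcases pairlem d e wd hde hmd hme amwd hwd (by rw [e2]; exact hwe) with ⟨h', a'⟩ | ⟨h', a'⟩
      · exact concl c e d (by simp) (by simp) (by simp) hce hcd (Ne.symm hde)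
          hamM axM (h' ▸ amwd) a'
      · exact concl c d e (by simp) (by simp) (by simp) hcd hce hde
          hamM axM (h' ▸ amwd) a'
    · by_cases e3 : wM = wd
      · exact triplelem M c d wM hMc hMd hcd hmM hmc hmd amwM hwM
          (by rw [e1]; exact hwc) (by rw [e3]; exact hwd)
      · by_cases e4 : wM = we
        · exact triplelem M c e wM hMc hMe hce hmM hmc hme amwM hwM
            (by rw [e1]; exact hwc) (by rw [e4]; exact hwe)
        · exact outdeg3 hD amwM amwd amwe e3 e4 e2
  · by_cases e2 : wM = wd
    · obtain ⟨eM, axM⟩ := Mfiber d wd hmd hMd (hmax d (by simp)) amwd hwd e2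
      have hamM : A m M := eM ▸ amwM
      by_cases e3 : wc = we
      · rcases pairlem c e wc hce hmc hme amwc hwc (by rw [e3]; exact hwe) with ⟨h', a'⟩ | ⟨h', a'⟩
        · exact concl d e c (by simp) (by simp) (by simp) hde (Ne.symm hcd) (Ne.symm hce)
            hamM axM (h' ▸ amwc) a'
        · exact concl d c e (by simp) (by simp) (by simp) (Ne.symm hcd) hde hce
            hamM axM (h' ▸ amwc) a'
      · by_cases e4 : wM = we
        · exact triplelem M d e wM hMd hMe hde hmM hmd hme amwM hwM
            (by rw [e2]; exact hwd) (by rw [e4]; exact hwe)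
        · exact outdeg3 hD amwM amwc amwe e1 e4 e3
    · by_cases e3 : wM = we
      · obtain ⟨eM, axM⟩ := Mfiber e we hme hMe (hmax e (by simp)) amwe hwe e3
        have hamM : A m M := eM ▸ amwM
        by_cases e4 : wc = wd
        · rcases pairlem c d wc hcd hmc hmd amwc hwc (by rw [e4]; exact hwd) with ⟨h', a'⟩ | ⟨h', a'⟩
          · exact concl e d c (by simp) (by simp) (by simp) (Ne.symm hde) (Ne.symm hce) (Ne.symm hcd)
              hamM axM (h' ▸ amwc) a'
          · exact concl e c d (by simp) (by simp) (by simp) (Ne.symm hce) (Ne.symm hde) hcd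
              hamM axM (h' ▸ amwc) a'
        · exact outdeg3 hD amwM amwc amwd e1 e2 e4
      · by_cases e4 : wc = wd
        · by_cases e5 : wc = we
          · exact triplelem c d e wc hcd hce hde hmc hmd hme amwc hwc
              (by rw [e4]; exact hwd) (by rw [e5]; exact hwe)
          · exact outdeg3 hD amwM amwc amwe e1 e3 e5
        · exact outdeg3 hD amwM amwc amwd e1 e2 e4
end Aux

/-- For any `(2,2)` digraph `D`, the phylogeny graph of `D` is `K₅`-free: it does not
contain five pairwise adjacent vertices. -/
theorem stmt_8 {V : Type*} [Fintype V] (A : V → V → Prop)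
    (hD : IsIJDigraph 2 2 A) :
    ¬ ∃ f : Fin 5 → V, ∀ i j : Fin 5, i ≠ j →
      (phylogenyGraph A).Adj (f i) (f j) := by
  rintro ⟨f, hf⟩
  have hne : ∀ i j : Fin 5, i ≠ j → f i ≠ f j := fun i j h => (hf i j h).ne
  haveI : IsIrrefl V (Relation.TransGen A) := ⟨hD.1⟩
  haveI : IsTrans V (Relation.TransGen A) := ⟨fun _ _ _ h1 h2 => h1.trans h2⟩
  have hWF : WellFounded (Relation.TransGen A) := Finite.wellFounded_of_trans_of_irrefl _
  obtain ⟨m, hmS, hmin'⟩ := hWF.has_min (Set.range f) ⟨f 0, 0, rfl⟩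
  have hminR : ∀ z ∈ Set.range f, ¬ A z m := fun z hz h =>
    hmin' z hz (Relation.TransGen.single h)
  obtain ⟨i₀, h₀⟩ := hmS
  haveI : IsIrrefl V (fun a b => Relation.TransGen A b a) := ⟨fun a h => hD.1 a h⟩
  haveI : IsTrans V (fun a b => Relation.TransGen A b a) :=
    ⟨fun _ _ _ h1 h2 => Relation.TransGen.trans h2 h1⟩
  have hWF2 : WellFounded (fun a b => Relation.TransGen A b a) :=
    Finite.wellFounded_of_trans_of_irrefl _
  obtain ⟨j, hj⟩ : ∃ j : Fin 5, j ≠ i₀ := exists_ne i₀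
  have hne' : f j ≠ m := h₀ ▸ hne j i₀ hj
  obtain ⟨M, hMS, hmax'⟩ := hWF2.has_min (Set.range f \ {m}) ⟨f j, ⟨j, rfl⟩, hne'⟩
  obtain ⟨⟨i₁, h₁⟩, hMm⟩ := hMS
  have hMm' : M ≠ m := by simpa using hMm
  have hmaxR : ∀ z ∈ Set.range f, z ≠ m → ¬ A M z := fun z hz hzm h =>
    hmax' z ⟨hz, hzm⟩ (Relation.TransGen.single h)
  have hi01 : i₀ ≠ i₁ := fun h => hMm' (by rw [← h₁, ← h, h₀])
  have Hidx : ∀ a b : Fin 5, a ≠ b → ∃ p q r : Fin 5,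
      a ≠ p ∧ a ≠ q ∧ a ≠ r ∧ b ≠ p ∧ b ≠ q ∧ b ≠ r ∧ p ≠ q ∧ p ≠ r ∧ q ≠ r := by set_option synthInstance.maxSize 1000 in decide
  obtain ⟨i₂, i₃, i₄, d02, d03, d04, d12, d13, d14, d23, d24, d34⟩ := Hidx i₀ i₁ hi01
  have hmM : m ≠ M := Ne.symm hMm'
  have hmc : m ≠ f i₂ := by rw [← h₀]; exact hne i₀ i₂ d02
  have hmd : m ≠ f i₃ := by rw [← h₀]; exact hne i₀ i₃ d03
  have hme : m ≠ f i₄ := by rw [← h₀]; exact hne i₀ i₄ d04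
  have hMc : M ≠ f i₂ := by rw [← h₁]; exact hne i₁ i₂ d12
  have hMd : M ≠ f i₃ := by rw [← h₁]; exact hne i₁ i₃ d13
  have hMe : M ≠ f i₄ := by rw [← h₁]; exact hne i₁ i₄ d14
  have hcd : f i₂ ≠ f i₃ := hne i₂ i₃ d23
  have hce : f i₂ ≠ f i₄ := hne i₂ i₄ d24
  have hde : f i₃ ≠ f i₄ := hne i₃ i₄ d34
  have himg : ∀ p ∈ ([m, M, f i₂, f i₃, f i₄] : List V), ∃ i, f i = p := by
    intro p hp
    simp only [List.mem_cons, List.mem_singleton, List.not_mem_nil, or_false] at hp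
    rcases hp with rfl | rfl | rfl | rfl | rfl
    exacts [⟨i₀, h₀⟩, ⟨i₁, h₁⟩, ⟨i₂, rfl⟩, ⟨i₃, rfl⟩, ⟨i₄, rfl⟩]
  have hadj : ∀ p ∈ ([m, M, f i₂, f i₃, f i₄] : List V),
      ∀ q ∈ ([m, M, f i₂, f i₃, f i₄] : List V), p ≠ q →
      A p q ∨ A q p ∨ ∃ w, A p w ∧ A q w := by
    intro p hp q hq hpq
    obtain ⟨i, rfl⟩ := himg p hp
    obtain ⟨j', rfl⟩ := himg q hq
    have hij : i ≠ j' := fun h => hpq (congrArg f h)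
    exact adj_unfold (hf i j' hij)
  have hminL : ∀ z ∈ ([M, f i₂, f i₃, f i₄] : List V), ¬ A z m := by
    intro z hz
    apply hminR
    simp only [List.mem_cons, List.mem_singleton, List.not_mem_nil, or_false] at hz
    rcases hz with rfl | rfl | rfl | rfl
    exacts [⟨i₁, h₁⟩, ⟨i₂, rfl⟩, ⟨i₃, rfl⟩, ⟨i₄, rfl⟩]
  have hmaxL : ∀ z ∈ ([m, f i₂, f i₃, f i₄] : List V), ¬ A M z := by
    intro z hz
    simp only [List.mem_cons, List.mem_singleton, List.not_mem_nil, or_false] at hz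
    rcases hz with rfl | rfl | rfl | rfl
    · exact hminR M ⟨i₁, h₁⟩
    · exact hmaxR _ ⟨i₂, rfl⟩ (Ne.symm hmc)
    · exact hmaxR _ ⟨i₃, rfl⟩ (Ne.symm hmd)
    · exact hmaxR _ ⟨i₄, rfl⟩ (Ne.symm hme)
  exact core hD hmM hmc hmd hme hMc hMd hMe hcd hce hde hadj hminL hmaxL
end

section
/- Let D be a (2,2) digraph. If the underlying graph U(D) of D contains a hole H of length at least 7, then the subgraph of the phylogeny graph P(D) induced by the vertex set of H is not chordal. -/
open SimpleGraph

namespace Stmt9Aux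

variable {V : Type*}

lemma support_get? {G : SimpleGraph V} :
    ∀ {u v : V} (p : G.Walk u v) (i : ℕ), i ≤ p.length → p.support[i]? = some (p.getVert i) := by
  intro u v p
  induction p with
  | nil =>
    intro i hi
    simp only [Walk.length_nil, Nat.le_zero] at hi
    subst hi
    simp
  | cons h q ih =>
    intro i hi
    match i with
    | 0 => simp
    | (j+1) =>
      rw [Walk.support_cons, List.getElem?_cons_succ, Walk.getVert_cons_succ]
      exact ih j (by simpa using hi)

lemma cycle_getVert_inj {G : SimpleGraph V} {v : V} {c : G.Walk v v} (hc : c.IsCycle)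
    {i j : ℕ} (hi : i < c.length) (hj : j < c.length) (hij : c.getVert i = c.getVert j) :
    i = j := by
  have hnd : c.support.tail.Nodup := hc.2
  have hlen : c.support.length = c.length + 1 := c.length_support
  have htl : c.support.tail.length = c.length := by
    rw [List.length_tail, hlen]; omega
  have hcons : c.support = v :: c.support.tail := c.support_eq_cons
  have key : ∀ k, k ≤ c.length → 1 ≤ k → c.support.tail[k-1]? = some (c.getVert k) := by
    intro k hk h1
    have := support_get? c k hk
    rw [hcons, show k = (k-1)+1 by omega, List.getElem?_cons_succ] at this
    rw [show k-1+1 = k by omega] at this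
    exact this
  have inj : ∀ a b, a ≤ c.length → b ≤ c.length → 1 ≤ a → 1 ≤ b →
      c.getVert a = c.getVert b → a = b := by
    intro a b ha hb h1a h1b hab
    have e1 := key a ha h1a
    have e2 := key b hb h1b
    rw [hab] at e1
    have := (List.getElem?_inj (by omega : a - 1 < c.support.tail.length) hnd).mp (e1.trans e2.symm)
    omega
  rcases Nat.eq_zero_or_pos i with hi0 | hip
  · rcases Nat.eq_zero_or_pos j with hj0 | hjp
    · omega
    · subst hi0
      have hv : c.getVert c.length = c.getVert j :=
        (c.getVert_length).trans ((c.getVert_zero).symm.trans hij)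
      have := inj c.length j le_rfl (by omega) (by omega) (by omega) hv
      omega
  · rcases Nat.eq_zero_or_pos j with hj0 | hjp
    · subst hj0
      have hv : c.getVert c.length = c.getVert i :=
        (c.getVert_length).trans ((c.getVert_zero).symm.trans hij.symm)
      have := inj c.length i le_rfl (by omega) (by omega) (by omega) hv
      omega
    · exact inj i j (by omega) (by omega) hip hjp hij

lemma mem_edges_exists {G : SimpleGraph V} :
    ∀ {u v : V} (p : G.Walk u v) {e : Sym2 V}, e ∈ p.edges →
      ∃ i, i < p.length ∧ e = s(p.getVert i, p.getVert (i+1)) := by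
  intro u v p
  induction p with
  | nil => intro e he; simp at he
  | @cons a b cc h q ih =>
    intro e he
    rw [Walk.edges_cons, List.mem_cons] at he
    rcases he with he | he
    · exact ⟨0, by simp, by simpa using he⟩
    · obtain ⟨i, hi, hei⟩ := ih he
      exact ⟨i+1, by simp; omega, by simpa using hei⟩

lemma exists_walk_of_chain {G : SimpleGraph V} :
    ∀ (l : List V) (a : V), List.Chain G.Adj a l →
      ∃ p : G.Walk a (l.getLastD a), p.support = a :: l ∧
        p.edges = List.zipWith (fun x y => s(x,y)) (a :: l) l := by
  intro l
  induction l with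
  | nil => intro a _; exact ⟨Walk.nil, rfl, rfl⟩
  | cons b t ih =>
    intro a hch
    have hch : G.Adj a b ∧ List.Chain G.Adj b t := List.isChain_cons_cons.mp hch
    obtain ⟨p, hs, he⟩ := ih b hch.2
    rw [List.getLastD_cons]
    exact ⟨Walk.cons hch.1 p, by simp [hs], by simp [he]⟩

lemma chain_iff_get' {α : Type*} {R : α → α → Prop} {a : α} {l : List α} :
    List.Chain R a l ↔ (∀ h : 0 < l.length, R a (l.get ⟨0, h⟩)) ∧
      ∀ (i : ℕ) (h : i < l.length - 1), R (l.get ⟨i, by omega⟩) (l.get ⟨i+1, by omega⟩) := by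
  show List.IsChain R (a :: l) ↔ _
  rw [List.isChain_iff_getElem]
  constructor
  · intro h
    exact ⟨fun h0 => h 0 (by simp; omega), fun i hi => h (i+1) (by simp; omega)⟩
  · rintro ⟨h1, h2⟩ i hi
    cases i with
    | zero => exact h1 (by simp at hi; omega)
    | succ i => exact h2 i (by simp at hi; omega)

lemma get_zipWith' {α β γ : Type*} {f : α → β → γ} {l : List α} {l' : List β}
    {i : Fin (List.zipWith f l l').length} :
    (List.zipWith f l l').get i = f (l.get ⟨i, List.lt_length_left_of_zipWith i.isLt⟩)
      (l'.get ⟨i, List.lt_length_right_of_zipWith i.isLt⟩) :=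
  List.getElem_zipWith

/-- The main gadget: a "combinatorial cycle" of `m ≥ 4` distinct vertices with consecutive
adjacency, in a graph in which every cycle of length ≥ 4 has a chord, has a chord. -/
lemma key_of_chordal {G : SimpleGraph V}
    (hch : ∀ (v : V) (c : G.Walk v v), c.IsCycle → 4 ≤ c.length →
      ∃ x ∈ c.support, ∃ y ∈ c.support, G.Adj x y ∧ s(x, y) ∉ c.edges)
    (m : ℕ) (u : ℕ → V) (hm : 4 ≤ m)
    (hinj : ∀ i j, i < m → j < m → u i = u j → i = j)
    (hadj : ∀ i, i + 1 < m → G.Adj (u i) (u (i+1)))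
    (hcl : G.Adj (u (m-1)) (u 0)) :
    ∃ i j, i < m ∧ j < m ∧ i + 1 < j ∧ ¬(i = 0 ∧ j = m-1) ∧ G.Adj (u i) (u j) := by
  have hm0 : 0 < m := by omega
  set ψ : ℕ → V := fun k => u (k % m) with hψ
  have hψlt : ∀ k, k < m → ψ k = u k := fun k hk => by
    simp only [hψ]; rw [Nat.mod_eq_of_lt hk]
  have hψm : ψ m = u 0 := by simp only [hψ]; rw [Nat.mod_self]
  have hψadj : ∀ k, k < m → G.Adj (ψ k) (ψ (k+1)) := by
    intro k hk
    by_cases h : k + 1 < m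
    · rw [hψlt k hk, hψlt (k+1) h]; exact hadj k h
    · have hk1 : k = m - 1 := by omega
      have : k + 1 = m := by omega
      rw [this, hψm, hψlt k hk, hk1]; exact hcl
  set φ : ℕ → V := fun k => ψ (k+1) with hφ
  set l₀ : List V := (List.range m).map φ with hl₀
  have hlenl : l₀.length = m := by simp [hl₀]
  have hgetl : ∀ (k : ℕ) (h : k < l₀.length), l₀.get ⟨k, h⟩ = φ k := by
    intro k h; simp [hl₀]
  have hchain : List.Chain G.Adj (u 0) l₀ := by
    rw [chain_iff_get']
    constructor
    · intro h
      rw [hgetl 0 h]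
      have := hψadj 0 hm0
      rwa [hψlt 0 hm0] at this
    · intro i h
      rw [hgetl i (by omega), hgetl (i+1) (by omega)]
      exact hψadj (i+1) (by omega)
  have hlast : l₀.getLastD (u 0) = u 0 := by
    have : l₀ = (List.range (m-1)).map φ ++ [φ (m-1)] := by
      rw [hl₀, show m = (m-1)+1 by omega, List.range_succ, List.map_append]
      simp
    rw [this, List.getLastD_concat]
    simp only [hφ]
    rw [show m - 1 + 1 = m by omega, hψm]
  obtain ⟨p₀, hs₀, he₀⟩ := exists_walk_of_chain l₀ (u 0) hchain
  set p : G.Walk (u 0) (u 0) := p₀.copy rfl hlast with hp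
  have hs : p.support = u 0 :: l₀ := by rw [hp, Walk.support_copy, hs₀]
  have he : p.edges = List.zipWith (fun x y => s(x,y)) (u 0 :: l₀) l₀ := by
    rw [hp, Walk.edges_copy, he₀]
  -- edges as an explicit map
  set E : ℕ → Sym2 V := fun k => s(ψ k, ψ (k+1)) with hE
  have hcget : ∀ (k : ℕ) (h : k < (u 0 :: l₀).length), (u 0 :: l₀).get ⟨k, h⟩ = ψ k := by
    intro k h
    match k with
    | 0 =>
      show u 0 = ψ 0
      rw [hψlt 0 hm0]
    | (t+1) =>
      show l₀.get ⟨t, by simpa using h⟩ = ψ (t+1)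
      rw [hgetl t (by simpa using h)]
  have heE : p.edges = (List.range m).map E := by
    rw [he]
    apply List.ext_get
    · simp [hl₀]
    · intro k h1 h2
      simp only [List.length_zipWith, List.length_cons, hlenl] at h1
      have hk : k < m := by omega
      rw [get_zipWith']
      have hr : ((List.range m).map E).get ⟨k, by simpa using hk⟩ = E k := by simp
      rw [hr, hcget k (by simp [hlenl]; omega), hgetl k (by omega)]
  have hplen : p.length = m := by
    have h1 := p.length_support
    rw [hs] at h1
    simp only [List.length_cons, hlenl] at h1
    omega
  -- injectivity of ψ on [0, m)
  have hψinj : ∀ x y, x < m → y < m → ψ x = ψ y → x = y := by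
    intro x y hx hy hxy
    rw [hψlt x hx, hψlt y hy] at hxy
    exact hinj x y hx hy hxy
  have hψinj' : ∀ x y, x ≤ m → y ≤ m → ψ x = ψ y → x % m = y % m := by
    intro x y hx hy hxy
    have h1 : ψ x = ψ (x % m) := by
      simp only [hψ]; rw [Nat.mod_mod_of_dvd x dvd_rfl]
    have h2 : ψ y = ψ (y % m) := by
      simp only [hψ]; rw [Nat.mod_mod_of_dvd y dvd_rfl]
    exact hψinj _ _ (Nat.mod_lt _ hm0) (Nat.mod_lt _ hm0) (by rw [← h1, ← h2, hxy])
  -- the walk is a cycle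
  have hcyc : p.IsCycle := by
    refine ⟨⟨⟨?_⟩, ?_⟩, ?_⟩
    · -- edges nodup
      rw [heE]
      refine List.Nodup.map_on ?_ List.nodup_range
      intro x hx y hy hxy
      rw [List.mem_range] at hx hy
      simp only [hE] at hxy
      rw [Sym2.eq_iff] at hxy
      rcases hxy with ⟨h1, _⟩ | ⟨h1, h2⟩
      · exact hψinj x y hx hy h1
      · have e1 := hψinj' x (y+1) (by omega) (by omega) h1
        have e2 := hψinj' (x+1) y (by omega) (by omega) h2
        rw [Nat.mod_eq_of_lt hx] at e1
        rw [Nat.mod_eq_of_lt hy] at e2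
        by_cases hy1 : y + 1 < m
        · rw [Nat.mod_eq_of_lt hy1] at e1
          by_cases hx1 : x + 1 < m
          · rw [Nat.mod_eq_of_lt hx1] at e2; omega
          · rw [show x + 1 = m by omega, Nat.mod_self] at e2; omega
        · rw [show y + 1 = m by omega, Nat.mod_self] at e1
          by_cases hx1 : x + 1 < m
          · rw [Nat.mod_eq_of_lt hx1] at e2; omega
          · rw [show x + 1 = m by omega, Nat.mod_self] at e2; omega
    · -- ne nil
      intro hnil
      rw [hnil] at hplen
      simp at hplen
      omega
    · -- support tail nodup
      rw [hs]
      simp only [List.tail_cons]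
      refine List.Nodup.map_on ?_ List.nodup_range
      intro x hx y hy hxy
      rw [List.mem_range] at hx hy
      simp only [hφ] at hxy
      have := hψinj' (x+1) (y+1) (by omega) (by omega) hxy
      by_cases hx1 : x + 1 < m
      · rw [Nat.mod_eq_of_lt hx1] at this
        by_cases hy1 : y + 1 < m
        · rw [Nat.mod_eq_of_lt hy1] at this; omega
        · rw [show y + 1 = m by omega, Nat.mod_self] at this; omega
      · rw [show x + 1 = m by omega, Nat.mod_self] at this
        by_cases hy1 : y + 1 < m
        · rw [Nat.mod_eq_of_lt hy1] at this; omega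
        · rw [show y + 1 = m by omega, Nat.mod_self] at this; omega
  -- membership in support gives an index
  have hmemsup : ∀ x ∈ p.support, ∃ i, i < m ∧ x = u i := by
    intro x hx
    rw [hs] at hx
    rcases List.mem_cons.mp hx with h | h
    · exact ⟨0, hm0, h⟩
    · rw [hl₀, List.mem_map] at h
      obtain ⟨k, hk, hkx⟩ := h
      rw [List.mem_range] at hk
      refine ⟨(k+1) % m, Nat.mod_lt _ hm0, ?_⟩
      rw [← hkx]
  -- consecutive edges are in the walk
  have hconsec : ∀ i, i + 1 < m → s(u i, u (i+1)) ∈ p.edges := by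
    intro i hi
    rw [heE, List.mem_map]
    refine ⟨i, by rw [List.mem_range]; omega, ?_⟩
    simp only [hE]
    rw [hψlt i (by omega), hψlt (i+1) hi]
  have hclose : s(u (m-1), u 0) ∈ p.edges := by
    rw [heE, List.mem_map]
    refine ⟨m-1, by rw [List.mem_range]; omega, ?_⟩
    simp only [hE]
    rw [hψlt (m-1) (by omega), show m - 1 + 1 = m by omega, hψm]
  -- apply chordality
  obtain ⟨x, hx, y, hy, hxy, hne⟩ := hch (u 0) p hcyc (by omega)
  obtain ⟨i, hi, rfl⟩ := hmemsup x hx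
  obtain ⟨j, hj, rfl⟩ := hmemsup y hy
  have hij : i ≠ j := fun h => G.irrefl (h ▸ hxy)
  have claim : ∀ a b, a < b → b < m → G.Adj (u a) (u b) → s(u a, u b) ∉ p.edges →
      ∃ i j, i < m ∧ j < m ∧ i + 1 < j ∧ ¬(i = 0 ∧ j = m-1) ∧ G.Adj (u i) (u j) := by
    intro a b hab hbm hadj' hne'
    refine ⟨a, b, by omega, hbm, ?_, ?_, hadj'⟩
    · by_contra h
      have hb : b = a + 1 := by omega
      exact hne' (hb ▸ hconsec a (by omega))
    · rintro ⟨rfl, rfl⟩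
      exact hne' (by rw [Sym2.eq_swap]; exact hclose)
  rcases lt_or_gt_of_ne hij with h | h
  · exact claim i j h hj hxy hne
  · exact claim j i h hi hxy.symm (by rwa [Sym2.eq_swap])




/-- `adjP i j` : hole positions `i`, `j` are adjacent in the phylogeny graph. -/
def adjP (A : V → V → Prop) (w : ℕ → V) (i j : ℕ) : Prop :=
  (phylogenyGraph A).Adj (w i) (w j)

/-- `Ch i j` : a chord of the hole (positions `i < j`, not hole-adjacent). -/
def Ch (A : V → V → Prop) (w : ℕ → V) (N : ℕ) (i j : ℕ) : Prop :=
  i + 2 ≤ j ∧ j ≤ N ∧ ¬(i = 0 ∧ j = N) ∧ adjP A w i j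

/-- chord at `u` with partner `x` (unordered). -/
def ChAt (A : V → V → Prop) (w : ℕ → V) (N : ℕ) (u x : ℕ) : Prop :=
  Ch A w N u x ∨ Ch A w N x u

def GoodAt (A : V → V → Prop) (w : ℕ → V) (N : ℕ) (u : ℕ) : Prop :=
  u + 1 ≤ N ∧ ∃ x1 x2 y1 y2,
    x1 ≠ x2 ∧ y1 ≠ y2 ∧
    ChAt A w N u x1 ∧ ChAt A w N u x2 ∧
    ChAt A w N (u+1) y1 ∧ ChAt A w N (u+1) y2 ∧
    x1 ≠ u + 2 ∧ x2 ≠ u + 2 ∧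
    (u + 1 = N → x1 ≠ 0 ∧ x2 ≠ 0) ∧
    (1 ≤ u → y1 ≠ u - 1 ∧ y2 ≠ u - 1) ∧
    (u = 0 → y1 ≠ N ∧ y2 ≠ N)

def GoodWrap (A : V → V → Prop) (w : ℕ → V) (N : ℕ) : Prop :=
  ∃ x1 x2 y1 y2,
    x1 ≠ x2 ∧ y1 ≠ y2 ∧
    ChAt A w N N x1 ∧ ChAt A w N N x2 ∧
    ChAt A w N 0 y1 ∧ ChAt A w N 0 y2 ∧
    x1 ≠ 1 ∧ x2 ≠ 1 ∧ y1 ≠ N - 1 ∧ y2 ≠ N - 1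

/-- All the facts about the hole and digraph we need, bundled. -/
structure Ctx (V : Type*) (A : V → V → Prop) (w : ℕ → V) (N : ℕ) : Prop where
  hfinV : Finite V
  hin : ∀ x : V, {u | A u x}.ncard ≤ 2
  hout : ∀ x : V, {u | A x u}.ncard ≤ 2
  hinj : ∀ i, i ≤ N → ∀ j, j ≤ N → w i = w j → i = j
  hadj : ∀ i, i < N → (underlyingGraph A).Adj (w i) (w (i+1))
  hwrap : (underlyingGraph A).Adj (w N) (w 0)
  hind : ∀ i, i ≤ N → ∀ j, j ≤ N → (underlyingGraph A).Adj (w i) (w j) →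
      j = i + 1 ∨ i = j + 1 ∨ (i = 0 ∧ j = N) ∨ (j = 0 ∧ i = N)
  hN : 6 ≤ N
  key : ∀ (m : ℕ) (g : ℕ → ℕ), 4 ≤ m → (∀ i, i + 1 < m → g i < g (i+1)) →
      (∀ i, i < m → g i ≤ N) → (∀ i, i + 1 < m → adjP A w (g i) (g (i+1))) →
      adjP A w (g 0) (g (m-1)) →
      ∃ i j, i < m ∧ j < m ∧ i + 1 < j ∧ ¬(i = 0 ∧ j = m-1) ∧ adjP A w (g i) (g j)

variable {A : V → V → Prop} {w : ℕ → V} {N : ℕ}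

lemma adjP_symm {i j : ℕ} (h : adjP A w i j) : adjP A w j i := h.symm

lemma adjP_of_U {i j : ℕ} (h : (underlyingGraph A).Adj (w i) (w j)) : adjP A w i j :=
  Or.inl h

lemma adjP_succ (C : Ctx V A w N) {i : ℕ} (h : i < N) : adjP A w i (i+1) :=
  adjP_of_U (C.hadj i h)

lemma out3 (C : Ctx V A w N) {x p q r : V} (h1 : A x p) (h2 : A x q) (h3 : A x r)
    (d1 : p ≠ q) (d2 : p ≠ r) (d3 : q ≠ r) : False := by
  have : Finite V := C.hfinV
  have hsub : ({p, q, r} : Set V) ⊆ {u | A x u} := by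
    intro z hz
    rcases hz with rfl | rfl | rfl <;> assumption
  have h3' : ({p, q, r} : Set V).ncard = 3 := Set.ncard_eq_three.mpr ⟨p, q, r, d1, d2, d3, rfl⟩
  have hle := Set.ncard_le_ncard hsub (Set.toFinite _)
  have := C.hout x
  omega

lemma in3 (C : Ctx V A w N) {x p q r : V} (h1 : A p x) (h2 : A q x) (h3 : A r x)
    (d1 : p ≠ q) (d2 : p ≠ r) (d3 : q ≠ r) : False := by
  have : Finite V := C.hfinV
  have hsub : ({p, q, r} : Set V) ⊆ {u | A u x} := by
    intro z hz
    rcases hz with rfl | rfl | rfl <;> assumption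
  have h3' : ({p, q, r} : Set V).ncard = 3 := Set.ncard_eq_three.mpr ⟨p, q, r, d1, d2, d3, rfl⟩
  have hle := Set.ncard_le_ncard hsub (Set.toFinite _)
  have := C.hin x
  omega

lemma ch_prey (C : Ctx V A w N) {i j : ℕ} (h : Ch A w N i j) :
    ∃ p, A (w i) p ∧ A (w j) p := by
  obtain ⟨h2, hjN, hnot, hP⟩ := h
  rcases hP with hU | hC
  · exfalso
    rcases C.hind i (by omega) j hjN hU with h' | h' | h' | h' <;> omega
  · obtain ⟨_, p, hp1, hp2⟩ := hC
    exact ⟨p, hp1, hp2⟩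

lemma chAt_prey (C : Ctx V A w N) {u x : ℕ} (h : ChAt A w N u x) :
    ∃ p, A (w u) p ∧ A (w x) p := by
  rcases h with h | h
  · exact ch_prey C h
  · obtain ⟨p, h1, h2⟩ := ch_prey C h
    exact ⟨p, h2, h1⟩

lemma chAt_facts {u x : ℕ} (h : ChAt A w N u x) :
    u ≤ N ∧ x ≤ N ∧ (u + 2 ≤ x ∨ x + 2 ≤ u) := by
  rcases h with ⟨h2, hN', _, _⟩ | ⟨h2, hN', _, _⟩ <;> omega

lemma w_ne (C : Ctx V A w N) {i j : ℕ} (hi : i ≤ N) (hj : j ≤ N) (hij : i ≠ j) :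
    w i ≠ w j := fun h => hij (C.hinj i hi j hj h)

/-- distinct chords at a common endpoint have distinct preys -/
lemma preys_ne (C : Ctx V A w N) {u x1 x2 : ℕ} {p1 p2 : V}
    (c1 : ChAt A w N u x1) (c2 : ChAt A w N u x2) (hx : x1 ≠ x2)
    (h1 : A (w x1) p1) (h2 : A (w x2) p2) (hu1 : A (w u) p1) (hu2 : A (w u) p2) :
    p1 ≠ p2 := by
  intro h
  subst h
  obtain ⟨huN, hx1N, hg1⟩ := chAt_facts c1
  obtain ⟨_, hx2N, hg2⟩ := chAt_facts c2
  exact in3 C hu1 h1 h2 (w_ne C huN hx1N (by omega)) (w_ne C huN hx2N (by omega))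
    (w_ne C hx1N hx2N hx)

lemma no_three_chords (C : Ctx V A w N) {u x1 x2 x3 : ℕ}
    (c1 : ChAt A w N u x1) (c2 : ChAt A w N u x2) (c3 : ChAt A w N u x3)
    (d12 : x1 ≠ x2) (d13 : x1 ≠ x3) (d23 : x2 ≠ x3) : False := by
  obtain ⟨p1, hp1, hq1⟩ := chAt_prey C c1
  obtain ⟨p2, hp2, hq2⟩ := chAt_prey C c2
  obtain ⟨p3, hp3, hq3⟩ := chAt_prey C c3
  exact out3 C hp1 hp2 hp3
    (preys_ne C c1 c2 d12 hq1 hq2 hp1 hp2)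
    (preys_ne C c1 c3 d13 hq1 hq3 hp1 hp3)
    (preys_ne C c2 c3 d23 hq2 hq3 hp2 hp3)

lemma orient_half (C : Ctx V A w N) {a b x1 x2 : ℕ}
    (harc : A (w a) (w b))
    (hbN : b ≤ N)
    (c1 : ChAt A w N a x1) (c2 : ChAt A w N a x2) (hx : x1 ≠ x2)
    (hbx1 : x1 ≠ b) (hbx2 : x2 ≠ b)
    (hnocenter : ∀ x, ChAt A w N a x → x = x1 ∨ x = x2 →
        ¬ (underlyingGraph A).Adj (w x) (w b)) : False := by
  obtain ⟨p1, hp1, hq1⟩ := chAt_prey C c1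
  obtain ⟨p2, hp2, hq2⟩ := chAt_prey C c2
  have hp12 : p1 ≠ p2 := preys_ne C c1 c2 hx hq1 hq2 hp1 hp2
  by_cases e1 : w b = p1
  · subst e1
    obtain ⟨_, hx1N, hg⟩ := chAt_facts c1
    refine hnocenter x1 c1 (Or.inl rfl) ?_
    exact ⟨w_ne C hx1N hbN hbx1, Or.inl hq1⟩
  · by_cases e2 : w b = p2
    · subst e2
      obtain ⟨_, hx2N, hg⟩ := chAt_facts c2
      refine hnocenter x2 c2 (Or.inr rfl) ?_
      exact ⟨w_ne C hx2N hbN hbx2, Or.inl hq2⟩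
    · exact out3 C hp1 hp2 harc hp12 (fun h => e1 h.symm) (fun h => e2 h.symm)

lemma orient (C : Ctx V A w N) {u : ℕ} (h : GoodAt A w N u) : False := by
  obtain ⟨huN, x1, x2, y1, y2, hx12, hy12, c1, c2, d1, d2, ex1, ex2, exN, eyl, ey0⟩ := h
  obtain ⟨hne, harc⟩ := C.hadj u (by omega)
  have hgx1 := chAt_facts c1
  have hgx2 := chAt_facts c2
  have hgy1 := chAt_facts d1
  have hgy2 := chAt_facts d2
  rcases harc with harc | harc
  · -- arc from u to u+1
    refine orient_half C harc (by omega) c1 c2 hx12 (by omega) (by omega) ?_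
    intro x cx hx1or hU
    obtain ⟨_, hxN, hgap⟩ := chAt_facts cx
    rcases C.hind x hxN (u+1) (by omega) hU with h' | h' | h' | h'
    · omega
    · rcases hx1or with rfl | rfl
      · exact ex1 (by omega)
      · exact ex2 (by omega)
    · rcases hx1or with rfl | rfl
      · exact (exN h'.2).1 h'.1
      · exact (exN h'.2).2 h'.1
    · omega
  · -- arc from u+1 to u
    refine orient_half C harc (by omega) d1 d2 hy12 (by omega) (by omega) ?_
    intro y cy hy1or hU
    obtain ⟨_, hyN, hgap⟩ := chAt_facts cy
    rcases C.hind y hyN u (by omega) hU with h' | h' | h' | h'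
    · omega
    · -- u = y + 1, i.e. y = u - 1 with u ≥ 1
      rcases hy1or with rfl | rfl
      · exact (eyl (by omega)).1 (by omega)
      · exact (eyl (by omega)).2 (by omega)
    · omega
    · rcases hy1or with rfl | rfl
      · exact (ey0 h'.1).1 h'.2
      · exact (ey0 h'.1).2 h'.2

lemma chAt_wrapN {x : ℕ} (h : ChAt A w N N x) : x ≠ 0 ∧ x + 2 ≤ N := by
  rcases h with ⟨h2, hN', _, _⟩ | ⟨h2, hN', hne, _⟩
  · omega
  · constructor
    · intro h0; exact hne ⟨h0, rfl⟩
    · omega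

lemma chAt_wrap0 {y : ℕ} (h : ChAt A w N 0 y) : y ≠ N ∧ 2 ≤ y := by
  rcases h with ⟨h2, hN', hne, _⟩ | ⟨h2, hN', _, _⟩
  · exact ⟨fun h0 => hne ⟨rfl, h0⟩, by omega⟩
  · omega

lemma orientW (C : Ctx V A w N) (h : GoodWrap A w N) : False := by
  obtain ⟨x1, x2, y1, y2, hx12, hy12, c1, c2, d1, d2, ex1, ex2, ey1, ey2⟩ := h
  have hN := C.hN
  obtain ⟨hne, harc⟩ := C.hwrap
  have hgx1 := chAt_facts c1
  have hgx2 := chAt_facts c2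
  have hgy1 := chAt_facts d1
  have hgy2 := chAt_facts d2
  have hw1 := chAt_wrapN c1
  have hw2 := chAt_wrapN c2
  have hz1 := chAt_wrap0 d1
  have hz2 := chAt_wrap0 d2
  rcases harc with harc | harc
  · -- arc from N to 0
    refine orient_half C harc (by omega) c1 c2 hx12 (by omega) (by omega) ?_
    intro x cx hx1or hU
    obtain ⟨_, hxN, hgap⟩ := chAt_facts cx
    rcases C.hind x hxN 0 (by omega) hU with h' | h' | h' | h'
    · omega
    · omega
    · omega
    · -- x = 0 is out since then 0 = x contradicting gap? here h' : x = 0 ∧ 0... 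
      rcases hx1or with rfl | rfl
      · exact ex1 (by omega)
      · exact ex2 (by omega)
  · -- arc from 0 to N
    refine orient_half C harc (by omega) d1 d2 hy12 (by omega) (by omega) ?_
    intro y cy hy1or hU
    obtain ⟨_, hyN, hgap⟩ := chAt_facts cy
    rcases C.hind y hyN N (by omega) hU with h' | h' | h' | h'
    · rcases hy1or with rfl | rfl
      · exact ey1 (by omega)
      · exact ey2 (by omega)
    · omega
    · omega
    · omega


lemma mono_of_succ {g : ℕ → ℕ} {m : ℕ} (h : ∀ i, i + 1 < m → g i < g (i+1)) :
    ∀ j, j < m → ∀ i, i < j → g i < g j := by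
  intro j
  induction j with
  | zero => omega
  | succ t ih =>
    intro hj i hi
    rcases Nat.lt_or_ge i t with h' | h'
    · exact (ih (by omega) i h').trans (h t (by omega))
    · have : i = t := by omega
      subst this
      exact h i (by omega)

/-- Base triangle lemma: every combinatorial cycle of length ≥ 3 (with all the
adjacency conditions) has a vertex strictly inside adjacent to both ends. -/
lemma bt (C : Ctx V A w N) : ∀ m, 3 ≤ m → ∀ g : ℕ → ℕ,
    (∀ i, i + 1 < m → g i < g (i+1)) → (∀ i, i < m → g i ≤ N) →
    (∀ i, i + 1 < m → adjP A w (g i) (g (i+1))) → adjP A w (g 0) (g (m-1)) →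
    ∃ k, 0 < k ∧ k + 1 < m ∧ adjP A w (g 0) (g k) ∧ adjP A w (g k) (g (m-1)) := by
  intro m
  induction m using Nat.strong_induction_on with
  | _ m ih =>
    intro hm g hmono hbd hadj hclose
    rcases Nat.lt_or_ge m 4 with hm4 | hm4
    · -- m = 3
      have h3 : m = 3 := by omega
      subst h3
      exact ⟨1, by omega, by omega, hadj 0 (by omega), hadj 1 (by omega)⟩
    · obtain ⟨i, j, him, hjm, hij, hne, hchord⟩ := C.key m g hm4 hmono hbd hadj hclose
      set d := j - i - 1 with hd
      have hd1 : 1 ≤ d := by omega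
      set m2 := m - d with hm2
      have hm2m : m2 < m := by omega
      have hm23 : 3 ≤ m2 := by omega
      set g2 : ℕ → ℕ := fun k => if k ≤ i then g k else g (k + d) with hg2
      have hg2v : ∀ k, g2 k = if k ≤ i then g k else g (k + d) := fun k => rfl
      have hmono2 : ∀ k, k + 1 < m2 → g2 k < g2 (k+1) := by
        intro k hk
        rw [hg2v, hg2v]
        by_cases h1 : k + 1 ≤ i
        · rw [if_pos (by omega), if_pos h1]
          exact hmono k (by omega)
        · by_cases h2 : k ≤ i
          · rw [if_pos h2, if_neg h1]
            have hki : k = i := by omega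
            subst hki
            have : k + 1 + d = j := by omega
            rw [this]
            exact mono_of_succ hmono j hjm k (by omega)
          · rw [if_neg h2, if_neg h1]
            have := hmono (k + d) (by omega)
            rwa [show k + d + 1 = k + 1 + d by omega] at this
      have hbd2 : ∀ k, k < m2 → g2 k ≤ N := by
        intro k hk
        rw [hg2v]
        split_ifs
        · exact hbd k (by omega)
        · exact hbd (k + d) (by omega)
      have hadj2 : ∀ k, k + 1 < m2 → adjP A w (g2 k) (g2 (k+1)) := by
        intro k hk
        rw [hg2v, hg2v]
        by_cases h1 : k + 1 ≤ i
        · rw [if_pos (by omega), if_pos h1]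
          exact hadj k (by omega)
        · by_cases h2 : k ≤ i
          · rw [if_pos h2, if_neg h1]
            have hki : k = i := by omega
            subst hki
            have : k + 1 + d = j := by omega
            rw [this]
            exact hchord
          · rw [if_neg h2, if_neg h1]
            have := hadj (k + d) (by omega)
            rwa [show k + d + 1 = k + 1 + d by omega] at this
      have hclose2 : adjP A w (g2 0) (g2 (m2-1)) := by
        rw [hg2v, hg2v]
        rw [if_pos (by omega), if_neg (by omega)]
        have : m2 - 1 + d = m - 1 := by omega
        rw [this]
        exact hclose
      obtain ⟨k2, hk2p, hk2m, ha1, ha2⟩ := ih m2 hm2m hm23 g2 hmono2 hbd2 hadj2 hclose2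
      refine ⟨if k2 ≤ i then k2 else k2 + d, ?_, ?_, ?_, ?_⟩
      · split_ifs <;> omega
      · split_ifs <;> omega
      · have e0 : g2 0 = g 0 := by rw [hg2v]; rw [if_pos (by omega)]
        have ek : g2 k2 = g (if k2 ≤ i then k2 else k2 + d) := by
          rw [hg2v]; split_ifs <;> rfl
        rwa [e0, ek] at ha1
      · have em : g2 (m2 - 1) = g (m-1) := by
          rw [hg2v, if_neg (by omega), show m2 - 1 + d = m - 1 by omega]
        have ek : g2 k2 = g (if k2 ≤ i then k2 else k2 + d) := by
          rw [hg2v]; split_ifs <;> rfl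
        rwa [em, ek] at ha2



/-- transport chords along index equalities -/
lemma ch_congr {i j i' j' : ℕ} (hi : i = i') (hj : j = j') (h : Ch A w N i j) :
    Ch A w N i' j' := hi ▸ hj ▸ h

lemma bt_interval (C : Ctx V A w N) {a b : ℕ} (h2 : a + 2 ≤ b) (hbN : b ≤ N)
    (hbase : adjP A w a b) :
    ∃ k, a + 1 ≤ k ∧ k + 1 ≤ b ∧ adjP A w a k ∧ adjP A w k b := by
  obtain ⟨k, hk0, hk1, ha1, ha2⟩ := bt C (b - a + 1) (by omega) (fun i => a + i)
    (fun i hi => by show a + i < a + (i+1); omega)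
    (fun i hi => by show a + i ≤ N; omega)
    (fun i hi => by
      show adjP A w (a + i) (a + (i+1))
      have := adjP_succ C (i := a + i) (by omega)
      have h2' : a + i + 1 = a + (i + 1) := by omega
      rwa [h2'] at this)
    (by
      have ha1' : a + 0 = a := by omega
      have ha2' : a + (b - a + 1 - 1) = b := by omega
      show adjP A w (a + 0) (a + (b - a + 1 - 1))
      rw [ha1', ha2']
      exact hbase)
  have ha1' : adjP A w (a + 0) (a + k) := ha1
  have ha2' : adjP A w (a + k) (a + (b - a + 1 - 1)) := ha2
  rw [show a + 0 = a by omega] at ha1'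
  rw [show a + (b - a + 1 - 1) = b by omega] at ha2'
  exact ⟨a + k, by omega, by omega, ha1', ha2'⟩

/-- shape of a triangulated interval of size 3 -/
def Shape3 (A : V → V → Prop) (w : ℕ → V) (N : ℕ) (a : ℕ) : Prop :=
  Ch A w N (a+1) (a+3) ∨ Ch A w N a (a+2)

/-- shape of a triangulated interval of size 4 -/
def Shape4 (A : V → V → Prop) (w : ℕ → V) (N : ℕ) (a : ℕ) : Prop :=
  (Ch A w N (a+1) (a+3) ∧ Ch A w N (a+1) (a+4)) ∨
  (Ch A w N a (a+2) ∧ Ch A w N (a+2) (a+4)) ∨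
  (Ch A w N a (a+3) ∧ Ch A w N (a+1) (a+3))

/-- The main interval induction. -/
lemma phi (C : Ctx V A w N) : ∀ s, 2 ≤ s → ∀ a, a + s ≤ N → Ch A w N a (a+s) →
    ((s = 3 → Shape3 A w N a) ∧ (s = 4 → Shape4 A w N a) ∧
     (5 ≤ s → ∃ u, GoodAt A w N u)) := by
  intro s
  induction s using Nat.strong_induction_on with
  | _ s ih =>
    intro hs2 a haN hbase
    have hN6 := C.hN
    have hb3 : ¬(a = 0 ∧ a + s = N) := hbase.2.2.1
    rcases Nat.lt_or_ge s 3 with hs | hs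
    · exact ⟨fun h => absurd h (by omega), fun h => absurd h (by omega),
        fun h => absurd h (by omega)⟩
    obtain ⟨mm, hmm1, hmm2, hA1, hA2⟩ :=
      bt_interval C (show a + 2 ≤ a + s by omega) (by omega) hbase.2.2.2
    obtain ⟨k, rfl, hk1, hk2⟩ : ∃ k, mm = a + k ∧ 1 ≤ k ∧ k + 1 ≤ s :=
      ⟨mm - a, by omega, by omega, by omega⟩
    have hchl : 2 ≤ k → Ch A w N a (a+k) := fun h => ⟨by omega, by omega, by omega, hA1⟩
    have hchr : 2 ≤ s - k → Ch A w N (a+k) (a+s) := fun h =>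
      ⟨by omega, by omega, by omega, hA2⟩
    rcases Nat.lt_or_ge k 5 with hk5 | hk5
    swap
    · have hres := ih k (by omega) (by omega) a (by omega) (hchl (by omega))
      exact ⟨fun h => absurd h (by omega), fun h => absurd h (by omega),
        fun _ => hres.2.2 (by omega)⟩
    rcases Nat.lt_or_ge (s - k) 5 with hsk5 | hsk5
    swap
    · have hres := ih (s-k) (by omega) (by omega) (a+k) (by omega)
        (ch_congr rfl (by omega) (hchr (by omega)))
      exact ⟨fun h => absurd h (by omega), fun h => absurd h (by omega),
        fun _ => hres.2.2 (by omega)⟩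
    have hs8 : s ≤ 8 := by omega
    interval_cases s
    · -- s = 3
      rcases (by omega : k = 1 ∨ k = 2) with rfl | rfl
      · exact ⟨fun _ => Or.inl (hchr (by omega)), fun h => absurd h (by omega),
          fun h => absurd h (by omega)⟩
      · exact ⟨fun _ => Or.inr (hchl (by omega)), fun h => absurd h (by omega),
          fun h => absurd h (by omega)⟩
    · -- s = 4
      rcases (by omega : k = 1 ∨ k = 2 ∨ k = 3) with rfl | rfl | rfl
      · have hR := hchr (by omega)
        have hsh2 := (ih 3 (by omega) (by omega) (a+1) (by omega) hR).1 rfl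
        rcases hsh2 with h2 | h2
        · exact absurd (no_three_chords (u := (a+4)) (x1 := (a+2)) (x2 := (a+1)) (x3 := a)
            C (Or.inr h2) (Or.inr hR) (Or.inr hbase) (by omega) (by omega) (by omega)) id
        · exact ⟨fun h => absurd h (by omega), fun _ => Or.inl ⟨h2, hR⟩,
            fun h => absurd h (by omega)⟩
      · have hL := hchl (by omega)
        have hR := hchr (by omega)
        exact ⟨fun h => absurd h (by omega), fun _ => Or.inr (Or.inl ⟨hL, hR⟩),
          fun h => absurd h (by omega)⟩
      · have hL := hchl (by omega)
        have hsh1 := (ih 3 (by omega) (by omega) a (by omega) hL).1 rfl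
        rcases hsh1 with h1 | h1
        · exact ⟨fun h => absurd h (by omega), fun _ => Or.inr (Or.inr ⟨hL, h1⟩),
            fun h => absurd h (by omega)⟩
        · exact absurd (no_three_chords (u := a) (x1 := (a+2)) (x2 := (a+3)) (x3 := (a+4))
            C (Or.inl h1) (Or.inl hL) (Or.inl hbase) (by omega) (by omega) (by omega)) id
    · -- s = 5
      interval_cases k
      · -- k = 1
        have hR := hchr (by omega)
        have hsh2 := (ih 4 (by omega) (by omega) (a+1) (by omega) hR).2.1 rfl
        rcases hsh2 with ⟨h2a, h2b⟩ | ⟨h2a, h2b⟩ | ⟨h2a, h2b⟩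
        · -- right shape 0
          exact absurd (no_three_chords (u := (a+5)) (x1 := (a+2)) (x2 := (a+1)) (x3 := a) C (Or.inr h2b) (Or.inr hR) (Or.inr hbase) (by omega) (by omega) (by omega)) id
        · -- right shape 1
          exact absurd (no_three_chords (u := (a+5)) (x1 := (a+3)) (x2 := (a+1)) (x3 := a) C (Or.inr h2b) (Or.inr hR) (Or.inr hbase) (by omega) (by omega) (by omega)) id
        · -- right shape 2
          exact ⟨fun h => absurd h (by omega), fun h => absurd h (by omega), fun _ => ⟨(a+4), by omega, (a+1), (a+2), (a+1), a, by omega, by omega, (Or.inr h2a), (Or.inr h2b), (Or.inr hR), (Or.inr hbase), by omega, by omega, fun h => ⟨by omega, by omega⟩, fun h => ⟨by omega, by omega⟩, fun h => ⟨by omega, by omega⟩⟩⟩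
      · -- k = 2
        have hL := hchl (by omega)
        have hR := hchr (by omega)
        have hsh2 := (ih 3 (by omega) (by omega) (a+2) (by omega) hR).1 rfl
        rcases hsh2 with h2 | h2
        · -- right shape 0
          exact absurd (no_three_chords (u := (a+5)) (x1 := (a+3)) (x2 := (a+2)) (x3 := a) C (Or.inr h2) (Or.inr hR) (Or.inr hbase) (by omega) (by omega) (by omega)) id
        · -- right shape 1
          exact absurd (no_three_chords (u := (a+2)) (x1 := (a+4)) (x2 := a) (x3 := (a+5)) C (Or.inl h2) (Or.inr hL) (Or.inl hR) (by omega) (by omega) (by omega)) id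
      · -- k = 3
        have hL := hchl (by omega)
        have hR := hchr (by omega)
        have hsh1 := (ih 3 (by omega) (by omega) a (by omega) hL).1 rfl
        rcases hsh1 with h1 | h1
        · -- left shape 0
          exact absurd (no_three_chords (u := (a+3)) (x1 := (a+1)) (x2 := a) (x3 := (a+5)) C (Or.inr h1) (Or.inr hL) (Or.inl hR) (by omega) (by omega) (by omega)) id
        · -- left shape 1
          exact absurd (no_three_chords (u := a) (x1 := (a+2)) (x2 := (a+3)) (x3 := (a+5)) C (Or.inl h1) (Or.inl hL) (Or.inl hbase) (by omega) (by omega) (by omega)) id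
      · -- k = 4
        have hL := hchl (by omega)
        have hsh1 := (ih 4 (by omega) (by omega) a (by omega) hL).2.1 rfl
        rcases hsh1 with ⟨h1a, h1b⟩ | ⟨h1a, h1b⟩ | ⟨h1a, h1b⟩
        · -- left shape 0
          exact ⟨fun h => absurd h (by omega), fun h => absurd h (by omega), fun _ => ⟨a, by omega, (a+4), (a+5), (a+3), (a+4), by omega, by omega, (Or.inl hL), (Or.inl hbase), (Or.inl h1a), (Or.inl h1b), by omega, by omega, fun h => ⟨by omega, by omega⟩, fun h => ⟨by omega, by omega⟩, fun h => ⟨by omega, by omega⟩⟩⟩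
        · -- left shape 1
          exact absurd (no_three_chords (u := a) (x1 := (a+2)) (x2 := (a+4)) (x3 := (a+5)) C (Or.inl h1a) (Or.inl hL) (Or.inl hbase) (by omega) (by omega) (by omega)) id
        · -- left shape 2
          exact absurd (no_three_chords (u := a) (x1 := (a+3)) (x2 := (a+4)) (x3 := (a+5)) C (Or.inl h1a) (Or.inl hL) (Or.inl hbase) (by omega) (by omega) (by omega)) id
    · -- s = 6
      interval_cases k
      · -- k = 1 (impossible)
        exact absurd hsk5 (by omega)
      · -- k = 2
        have hL := hchl (by omega)
        have hR := hchr (by omega)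
        have hsh2 := (ih 4 (by omega) (by omega) (a+2) (by omega) hR).2.1 rfl
        rcases hsh2 with ⟨h2a, h2b⟩ | ⟨h2a, h2b⟩ | ⟨h2a, h2b⟩
        · -- right shape 0
          exact absurd (no_three_chords (u := (a+6)) (x1 := (a+3)) (x2 := (a+2)) (x3 := a) C (Or.inr h2b) (Or.inr hR) (Or.inr hbase) (by omega) (by omega) (by omega)) id
        · -- right shape 1
          exact absurd (no_three_chords (u := (a+2)) (x1 := (a+4)) (x2 := a) (x3 := (a+6)) C (Or.inl h2a) (Or.inr hL) (Or.inl hR) (by omega) (by omega) (by omega)) id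
        · -- right shape 2
          exact absurd (no_three_chords (u := (a+2)) (x1 := (a+5)) (x2 := a) (x3 := (a+6)) C (Or.inl h2a) (Or.inr hL) (Or.inl hR) (by omega) (by omega) (by omega)) id
      · -- k = 3
        have hL := hchl (by omega)
        have hR := hchr (by omega)
        have hsh1 := (ih 3 (by omega) (by omega) a (by omega) hL).1 rfl
        have hsh2 := (ih 3 (by omega) (by omega) (a+3) (by omega) hR).1 rfl
        rcases hsh1 with h1 | h1
        · -- left shape 0
          rcases hsh2 with h2 | h2
          · -- right shape 0
            exact absurd (no_three_chords (u := (a+3)) (x1 := (a+1)) (x2 := a) (x3 := (a+6)) C (Or.inr h1) (Or.inr hL) (Or.inl hR) (by omega) (by omega) (by omega)) id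
          · -- right shape 1
            exact absurd (no_three_chords (u := (a+3)) (x1 := (a+1)) (x2 := (a+5)) (x3 := a) C (Or.inr h1) (Or.inl h2) (Or.inr hL) (by omega) (by omega) (by omega)) id
        · -- left shape 1
          rcases hsh2 with h2 | h2
          · -- right shape 0
            exact absurd (no_three_chords (u := a) (x1 := (a+2)) (x2 := (a+3)) (x3 := (a+6)) C (Or.inl h1) (Or.inl hL) (Or.inl hbase) (by omega) (by omega) (by omega)) id
          · -- right shape 1
            exact absurd (no_three_chords (u := a) (x1 := (a+2)) (x2 := (a+3)) (x3 := (a+6)) C (Or.inl h1) (Or.inl hL) (Or.inl hbase) (by omega) (by omega) (by omega)) id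
      · -- k = 4
        have hL := hchl (by omega)
        have hR := hchr (by omega)
        have hsh1 := (ih 4 (by omega) (by omega) a (by omega) hL).2.1 rfl
        rcases hsh1 with ⟨h1a, h1b⟩ | ⟨h1a, h1b⟩ | ⟨h1a, h1b⟩
        · -- left shape 0
          exact absurd (no_three_chords (u := (a+4)) (x1 := (a+1)) (x2 := a) (x3 := (a+6)) C (Or.inr h1b) (Or.inr hL) (Or.inl hR) (by omega) (by omega) (by omega)) id
        · -- left shape 1
          exact absurd (no_three_chords (u := a) (x1 := (a+2)) (x2 := (a+4)) (x3 := (a+6)) C (Or.inl h1a) (Or.inl hL) (Or.inl hbase) (by omega) (by omega) (by omega)) id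
        · -- left shape 2
          exact absurd (no_three_chords (u := a) (x1 := (a+3)) (x2 := (a+4)) (x3 := (a+6)) C (Or.inl h1a) (Or.inl hL) (Or.inl hbase) (by omega) (by omega) (by omega)) id
    · -- s = 7
      interval_cases k
      · -- k = 1 (impossible)
        exact absurd hsk5 (by omega)
      · -- k = 2 (impossible)
        exact absurd hsk5 (by omega)
      · -- k = 3
        have hL := hchl (by omega)
        have hR := hchr (by omega)
        have hsh1 := (ih 3 (by omega) (by omega) a (by omega) hL).1 rfl
        have hsh2 := (ih 4 (by omega) (by omega) (a+3) (by omega) hR).2.1 rfl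
        rcases hsh1 with h1 | h1
        · -- left shape 0
          rcases hsh2 with ⟨h2a, h2b⟩ | ⟨h2a, h2b⟩ | ⟨h2a, h2b⟩
          · -- right shape 0
            exact absurd (no_three_chords (u := (a+3)) (x1 := (a+1)) (x2 := a) (x3 := (a+7)) C (Or.inr h1) (Or.inr hL) (Or.inl hR) (by omega) (by omega) (by omega)) id
          · -- right shape 1
            exact absurd (no_three_chords (u := (a+3)) (x1 := (a+1)) (x2 := (a+5)) (x3 := a) C (Or.inr h1) (Or.inl h2a) (Or.inr hL) (by omega) (by omega) (by omega)) id
          · -- right shape 2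
            exact absurd (no_three_chords (u := (a+3)) (x1 := (a+1)) (x2 := (a+6)) (x3 := a) C (Or.inr h1) (Or.inl h2a) (Or.inr hL) (by omega) (by omega) (by omega)) id
        · -- left shape 1
          rcases hsh2 with ⟨h2a, h2b⟩ | ⟨h2a, h2b⟩ | ⟨h2a, h2b⟩
          · -- right shape 0
            exact absurd (no_three_chords (u := a) (x1 := (a+2)) (x2 := (a+3)) (x3 := (a+7)) C (Or.inl h1) (Or.inl hL) (Or.inl hbase) (by omega) (by omega) (by omega)) id
          · -- right shape 1
            exact absurd (no_three_chords (u := a) (x1 := (a+2)) (x2 := (a+3)) (x3 := (a+7)) C (Or.inl h1) (Or.inl hL) (Or.inl hbase) (by omega) (by omega) (by omega)) id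
          · -- right shape 2
            exact absurd (no_three_chords (u := a) (x1 := (a+2)) (x2 := (a+3)) (x3 := (a+7)) C (Or.inl h1) (Or.inl hL) (Or.inl hbase) (by omega) (by omega) (by omega)) id
      · -- k = 4
        have hL := hchl (by omega)
        have hR := hchr (by omega)
        have hsh1 := (ih 4 (by omega) (by omega) a (by omega) hL).2.1 rfl
        have hsh2 := (ih 3 (by omega) (by omega) (a+4) (by omega) hR).1 rfl
        rcases hsh1 with ⟨h1a, h1b⟩ | ⟨h1a, h1b⟩ | ⟨h1a, h1b⟩
        · -- left shape 0
          rcases hsh2 with h2 | h2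
          · -- right shape 0
            exact absurd (no_three_chords (u := (a+4)) (x1 := (a+1)) (x2 := a) (x3 := (a+7)) C (Or.inr h1b) (Or.inr hL) (Or.inl hR) (by omega) (by omega) (by omega)) id
          · -- right shape 1
            exact absurd (no_three_chords (u := (a+4)) (x1 := (a+1)) (x2 := (a+6)) (x3 := a) C (Or.inr h1b) (Or.inl h2) (Or.inr hL) (by omega) (by omega) (by omega)) id
        · -- left shape 1
          rcases hsh2 with h2 | h2
          · -- right shape 0
            exact absurd (no_three_chords (u := a) (x1 := (a+2)) (x2 := (a+4)) (x3 := (a+7)) C (Or.inl h1a) (Or.inl hL) (Or.inl hbase) (by omega) (by omega) (by omega)) id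
          · -- right shape 1
            exact absurd (no_three_chords (u := a) (x1 := (a+2)) (x2 := (a+4)) (x3 := (a+7)) C (Or.inl h1a) (Or.inl hL) (Or.inl hbase) (by omega) (by omega) (by omega)) id
        · -- left shape 2
          rcases hsh2 with h2 | h2
          · -- right shape 0
            exact absurd (no_three_chords (u := a) (x1 := (a+3)) (x2 := (a+4)) (x3 := (a+7)) C (Or.inl h1a) (Or.inl hL) (Or.inl hbase) (by omega) (by omega) (by omega)) id
          · -- right shape 1
            exact absurd (no_three_chords (u := a) (x1 := (a+3)) (x2 := (a+4)) (x3 := (a+7)) C (Or.inl h1a) (Or.inl hL) (Or.inl hbase) (by omega) (by omega) (by omega)) id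
    · -- s = 8
      interval_cases k
      · -- k = 1 (impossible)
        exact absurd hsk5 (by omega)
      · -- k = 2 (impossible)
        exact absurd hsk5 (by omega)
      · -- k = 3 (impossible)
        exact absurd hsk5 (by omega)
      · -- k = 4
        have hL := hchl (by omega)
        have hR := hchr (by omega)
        have hsh1 := (ih 4 (by omega) (by omega) a (by omega) hL).2.1 rfl
        have hsh2 := (ih 4 (by omega) (by omega) (a+4) (by omega) hR).2.1 rfl
        rcases hsh1 with ⟨h1a, h1b⟩ | ⟨h1a, h1b⟩ | ⟨h1a, h1b⟩
        · -- left shape 0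
          rcases hsh2 with ⟨h2a, h2b⟩ | ⟨h2a, h2b⟩ | ⟨h2a, h2b⟩
          · -- right shape 0
            exact absurd (no_three_chords (u := (a+4)) (x1 := (a+1)) (x2 := a) (x3 := (a+8)) C (Or.inr h1b) (Or.inr hL) (Or.inl hR) (by omega) (by omega) (by omega)) id
          · -- right shape 1
            exact absurd (no_three_chords (u := (a+4)) (x1 := (a+1)) (x2 := (a+6)) (x3 := a) C (Or.inr h1b) (Or.inl h2a) (Or.inr hL) (by omega) (by omega) (by omega)) id
          · -- right shape 2
            exact absurd (no_three_chords (u := (a+4)) (x1 := (a+1)) (x2 := (a+7)) (x3 := a) C (Or.inr h1b) (Or.inl h2a) (Or.inr hL) (by omega) (by omega) (by omega)) id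
        · -- left shape 1
          rcases hsh2 with ⟨h2a, h2b⟩ | ⟨h2a, h2b⟩ | ⟨h2a, h2b⟩
          · -- right shape 0
            exact absurd (no_three_chords (u := a) (x1 := (a+2)) (x2 := (a+4)) (x3 := (a+8)) C (Or.inl h1a) (Or.inl hL) (Or.inl hbase) (by omega) (by omega) (by omega)) id
          · -- right shape 1
            exact absurd (no_three_chords (u := a) (x1 := (a+2)) (x2 := (a+4)) (x3 := (a+8)) C (Or.inl h1a) (Or.inl hL) (Or.inl hbase) (by omega) (by omega) (by omega)) id
          · -- right shape 2
            exact absurd (no_three_chords (u := a) (x1 := (a+2)) (x2 := (a+4)) (x3 := (a+8)) C (Or.inl h1a) (Or.inl hL) (Or.inl hbase) (by omega) (by omega) (by omega)) id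
        · -- left shape 2
          rcases hsh2 with ⟨h2a, h2b⟩ | ⟨h2a, h2b⟩ | ⟨h2a, h2b⟩
          · -- right shape 0
            exact absurd (no_three_chords (u := a) (x1 := (a+3)) (x2 := (a+4)) (x3 := (a+8)) C (Or.inl h1a) (Or.inl hL) (Or.inl hbase) (by omega) (by omega) (by omega)) id
          · -- right shape 1
            exact absurd (no_three_chords (u := a) (x1 := (a+3)) (x2 := (a+4)) (x3 := (a+8)) C (Or.inl h1a) (Or.inl hL) (Or.inl hbase) (by omega) (by omega) (by omega)) id
          · -- right shape 2
            exact absurd (no_three_chords (u := a) (x1 := (a+3)) (x2 := (a+4)) (x3 := (a+8)) C (Or.inl h1a) (Or.inl hL) (Or.inl hbase) (by omega) (by omega) (by omega)) id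

/-- The root lemma : the whole hole yields an adjacent saturated pair. -/
lemma root (C : Ctx V A w N) : (∃ u, GoodAt A w N u) ∨ GoodWrap A w N := by
  have hN6 := C.hN
  obtain ⟨k, hk0, hk1, hA1, hA2⟩ := bt C (N+1) (by omega) (fun i => i)
    (fun i hi => by show i < i + 1; omega)
    (fun i hi => by show i ≤ N; omega)
    (fun i hi => by show adjP A w i (i+1); exact adjP_succ C (by omega))
    (by
      show adjP A w 0 (N + 1 - 1)
      rw [show N + 1 - 1 = N by omega]
      exact adjP_of_U C.hwrap.symm)
  have hA2' : adjP A w k N := by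
    have h : adjP A w k (N + 1 - 1) := hA2
    rwa [show N + 1 - 1 = N by omega] at h
  have hchl : 2 ≤ k → Ch A w N 0 k := fun h => ⟨by omega, by omega, by omega, hA1⟩
  have hchr : k ≤ N - 2 → Ch A w N k N := fun h => ⟨by omega, by omega, by omega, hA2'⟩
  rcases Nat.lt_or_ge k 5 with hk5 | hk5
  swap
  · left
    exact (phi C k (by omega) 0 (by omega)
      (ch_congr rfl (by omega) (hchl (by omega)))).2.2 (by omega)
  rcases Nat.lt_or_ge (N - k) 5 with hsk5 | hsk5
  swap
  · left
    exact (phi C (N-k) (by omega) k (by omega)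
      (ch_congr rfl (by omega) (hchr (by omega)))).2.2 (by omega)
  have hN8 : N ≤ 8 := by omega
  have hk2 : 2 ≤ k := by omega
  have hkN2 : k ≤ N - 2 := by omega
  interval_cases N
  · -- N = 6
    interval_cases k
    · -- k = 2
      have hL := hchl (by omega)
      have hR := hchr (by omega)
      have hsh2 := (phi C 4 (by omega) 2 (by omega) (ch_congr rfl (by omega) hR)).2.1 rfl
      rcases hsh2 with ⟨h2a, h2b⟩ | ⟨h2a, h2b⟩ | ⟨h2a, h2b⟩
      · -- right shape 0
        exact Or.inl ⟨2, by omega, 0, 6, 5, 6, by omega, by omega, (Or.inr hL), (Or.inl hR), (Or.inl h2a), (Or.inl h2b), by omega, by omega, fun h => ⟨by omega, by omega⟩, fun h => ⟨by omega, by omega⟩, fun h => ⟨by omega, by omega⟩⟩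
      · -- right shape 1
        exact absurd (no_three_chords (u := 2) (x1 := 4) (x2 := 0) (x3 := 6) C (Or.inl h2a) (Or.inr hL) (Or.inl hR) (by omega) (by omega) (by omega)) id
      · -- right shape 2
        exact absurd (no_three_chords (u := 2) (x1 := 5) (x2 := 0) (x3 := 6) C (Or.inl h2a) (Or.inr hL) (Or.inl hR) (by omega) (by omega) (by omega)) id
    · -- k = 3
      have hL := hchl (by omega)
      have hR := hchr (by omega)
      have hsh1 := (phi C 3 (by omega) 0 (by omega) (ch_congr rfl (by omega) hL)).1 rfl
      have hsh2 := (phi C 3 (by omega) 3 (by omega) (ch_congr rfl (by omega) hR)).1 rfl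
      rcases hsh1 with h1 | h1
      · -- left shape 0
        rcases hsh2 with h2 | h2
        · -- right shape 0
          exact absurd (no_three_chords (u := 3) (x1 := 1) (x2 := 0) (x3 := 6) C (Or.inr h1) (Or.inr hL) (Or.inl hR) (by omega) (by omega) (by omega)) id
        · -- right shape 1
          exact absurd (no_three_chords (u := 3) (x1 := 1) (x2 := 5) (x3 := 0) C (Or.inr h1) (Or.inl h2) (Or.inr hL) (by omega) (by omega) (by omega)) id
      · -- left shape 1
        rcases hsh2 with h2 | h2
        · -- right shape 0
          exact Or.inr ⟨4, 3, 2, 3, by omega, by omega, (Or.inr h2), (Or.inr hR), (Or.inl h1), (Or.inl hL), by omega, by omega, by omega, by omega⟩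
        · -- right shape 1
          exact absurd (no_three_chords (u := 3) (x1 := 5) (x2 := 0) (x3 := 6) C (Or.inl h2) (Or.inr hL) (Or.inl hR) (by omega) (by omega) (by omega)) id
    · -- k = 4
      have hL := hchl (by omega)
      have hR := hchr (by omega)
      have hsh1 := (phi C 4 (by omega) 0 (by omega) (ch_congr rfl (by omega) hL)).2.1 rfl
      rcases hsh1 with ⟨h1a, h1b⟩ | ⟨h1a, h1b⟩ | ⟨h1a, h1b⟩
      · -- left shape 0
        exact absurd (no_three_chords (u := 4) (x1 := 1) (x2 := 0) (x3 := 6) C (Or.inr h1b) (Or.inr hL) (Or.inl hR) (by omega) (by omega) (by omega)) id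
      · -- left shape 1
        exact absurd (no_three_chords (u := 4) (x1 := 2) (x2 := 0) (x3 := 6) C (Or.inr h1b) (Or.inr hL) (Or.inl hR) (by omega) (by omega) (by omega)) id
      · -- left shape 2
        exact Or.inl ⟨3, by omega, 0, 1, 0, 6, by omega, by omega, (Or.inr h1a), (Or.inr h1b), (Or.inr hL), (Or.inl hR), by omega, by omega, fun h => ⟨by omega, by omega⟩, fun h => ⟨by omega, by omega⟩, fun h => ⟨by omega, by omega⟩⟩
  · -- N = 7
    interval_cases k
    · -- k = 2 (impossible)
      exact absurd hsk5 (by omega)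
    · -- k = 3
      have hL := hchl (by omega)
      have hR := hchr (by omega)
      have hsh1 := (phi C 3 (by omega) 0 (by omega) (ch_congr rfl (by omega) hL)).1 rfl
      have hsh2 := (phi C 4 (by omega) 3 (by omega) (ch_congr rfl (by omega) hR)).2.1 rfl
      rcases hsh1 with h1 | h1
      · -- left shape 0
        rcases hsh2 with ⟨h2a, h2b⟩ | ⟨h2a, h2b⟩ | ⟨h2a, h2b⟩
        · -- right shape 0
          exact absurd (no_three_chords (u := 3) (x1 := 1) (x2 := 0) (x3 := 7) C (Or.inr h1) (Or.inr hL) (Or.inl hR) (by omega) (by omega) (by omega)) id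
        · -- right shape 1
          exact absurd (no_three_chords (u := 3) (x1 := 1) (x2 := 5) (x3 := 0) C (Or.inr h1) (Or.inl h2a) (Or.inr hL) (by omega) (by omega) (by omega)) id
        · -- right shape 2
          exact absurd (no_three_chords (u := 3) (x1 := 1) (x2 := 6) (x3 := 0) C (Or.inr h1) (Or.inl h2a) (Or.inr hL) (by omega) (by omega) (by omega)) id
      · -- left shape 1
        rcases hsh2 with ⟨h2a, h2b⟩ | ⟨h2a, h2b⟩ | ⟨h2a, h2b⟩
        · -- right shape 0
          exact Or.inl ⟨3, by omega, 0, 7, 6, 7, by omega, by omega, (Or.inr hL), (Or.inl hR), (Or.inl h2a), (Or.inl h2b), by omega, by omega, fun h => ⟨by omega, by omega⟩, fun h => ⟨by omega, by omega⟩, fun h => ⟨by omega, by omega⟩⟩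
        · -- right shape 1
          exact absurd (no_three_chords (u := 3) (x1 := 5) (x2 := 0) (x3 := 7) C (Or.inl h2a) (Or.inr hL) (Or.inl hR) (by omega) (by omega) (by omega)) id
        · -- right shape 2
          exact absurd (no_three_chords (u := 3) (x1 := 6) (x2 := 0) (x3 := 7) C (Or.inl h2a) (Or.inr hL) (Or.inl hR) (by omega) (by omega) (by omega)) id
    · -- k = 4
      have hL := hchl (by omega)
      have hR := hchr (by omega)
      have hsh1 := (phi C 4 (by omega) 0 (by omega) (ch_congr rfl (by omega) hL)).2.1 rfl
      have hsh2 := (phi C 3 (by omega) 4 (by omega) (ch_congr rfl (by omega) hR)).1 rfl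
      rcases hsh1 with ⟨h1a, h1b⟩ | ⟨h1a, h1b⟩ | ⟨h1a, h1b⟩
      · -- left shape 0
        rcases hsh2 with h2 | h2
        · -- right shape 0
          exact absurd (no_three_chords (u := 4) (x1 := 1) (x2 := 0) (x3 := 7) C (Or.inr h1b) (Or.inr hL) (Or.inl hR) (by omega) (by omega) (by omega)) id
        · -- right shape 1
          exact absurd (no_three_chords (u := 4) (x1 := 1) (x2 := 6) (x3 := 0) C (Or.inr h1b) (Or.inl h2) (Or.inr hL) (by omega) (by omega) (by omega)) id
      · -- left shape 1
        rcases hsh2 with h2 | h2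
        · -- right shape 0
          exact absurd (no_three_chords (u := 4) (x1 := 2) (x2 := 0) (x3 := 7) C (Or.inr h1b) (Or.inr hL) (Or.inl hR) (by omega) (by omega) (by omega)) id
        · -- right shape 1
          exact absurd (no_three_chords (u := 4) (x1 := 2) (x2 := 6) (x3 := 0) C (Or.inr h1b) (Or.inl h2) (Or.inr hL) (by omega) (by omega) (by omega)) id
      · -- left shape 2
        rcases hsh2 with h2 | h2
        · -- right shape 0
          exact Or.inl ⟨3, by omega, 0, 1, 0, 7, by omega, by omega, (Or.inr h1a), (Or.inr h1b), (Or.inr hL), (Or.inl hR), by omega, by omega, fun h => ⟨by omega, by omega⟩, fun h => ⟨by omega, by omega⟩, fun h => ⟨by omega, by omega⟩⟩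
        · -- right shape 1
          exact absurd (no_three_chords (u := 4) (x1 := 6) (x2 := 0) (x3 := 7) C (Or.inl h2) (Or.inr hL) (Or.inl hR) (by omega) (by omega) (by omega)) id
  · -- N = 8
    interval_cases k
    · -- k = 2 (impossible)
      exact absurd hsk5 (by omega)
    · -- k = 3 (impossible)
      exact absurd hsk5 (by omega)
    · -- k = 4
      have hL := hchl (by omega)
      have hR := hchr (by omega)
      have hsh1 := (phi C 4 (by omega) 0 (by omega) (ch_congr rfl (by omega) hL)).2.1 rfl
      have hsh2 := (phi C 4 (by omega) 4 (by omega) (ch_congr rfl (by omega) hR)).2.1 rfl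
      rcases hsh1 with ⟨h1a, h1b⟩ | ⟨h1a, h1b⟩ | ⟨h1a, h1b⟩
      · -- left shape 0
        rcases hsh2 with ⟨h2a, h2b⟩ | ⟨h2a, h2b⟩ | ⟨h2a, h2b⟩
        · -- right shape 0
          exact absurd (no_three_chords (u := 4) (x1 := 1) (x2 := 0) (x3 := 8) C (Or.inr h1b) (Or.inr hL) (Or.inl hR) (by omega) (by omega) (by omega)) id
        · -- right shape 1
          exact absurd (no_three_chords (u := 4) (x1 := 1) (x2 := 6) (x3 := 0) C (Or.inr h1b) (Or.inl h2a) (Or.inr hL) (by omega) (by omega) (by omega)) id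
        · -- right shape 2
          exact absurd (no_three_chords (u := 4) (x1 := 1) (x2 := 7) (x3 := 0) C (Or.inr h1b) (Or.inl h2a) (Or.inr hL) (by omega) (by omega) (by omega)) id
      · -- left shape 1
        rcases hsh2 with ⟨h2a, h2b⟩ | ⟨h2a, h2b⟩ | ⟨h2a, h2b⟩
        · -- right shape 0
          exact absurd (no_three_chords (u := 4) (x1 := 2) (x2 := 0) (x3 := 8) C (Or.inr h1b) (Or.inr hL) (Or.inl hR) (by omega) (by omega) (by omega)) id
        · -- right shape 1
          exact absurd (no_three_chords (u := 4) (x1 := 2) (x2 := 6) (x3 := 0) C (Or.inr h1b) (Or.inl h2a) (Or.inr hL) (by omega) (by omega) (by omega)) id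
        · -- right shape 2
          exact absurd (no_three_chords (u := 4) (x1 := 2) (x2 := 7) (x3 := 0) C (Or.inr h1b) (Or.inl h2a) (Or.inr hL) (by omega) (by omega) (by omega)) id
      · -- left shape 2
        rcases hsh2 with ⟨h2a, h2b⟩ | ⟨h2a, h2b⟩ | ⟨h2a, h2b⟩
        · -- right shape 0
          exact Or.inl ⟨3, by omega, 0, 1, 0, 8, by omega, by omega, (Or.inr h1a), (Or.inr h1b), (Or.inr hL), (Or.inl hR), by omega, by omega, fun h => ⟨by omega, by omega⟩, fun h => ⟨by omega, by omega⟩, fun h => ⟨by omega, by omega⟩⟩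
        · -- right shape 1
          exact absurd (no_three_chords (u := 4) (x1 := 6) (x2 := 0) (x3 := 8) C (Or.inl h2a) (Or.inr hL) (Or.inl hR) (by omega) (by omega) (by omega)) id
        · -- right shape 2
          exact absurd (no_three_chords (u := 4) (x1 := 7) (x2 := 0) (x3 := 8) C (Or.inl h2a) (Or.inr hL) (Or.inl hR) (by omega) (by omega) (by omega)) id

end Stmt9Aux

open Stmt9Aux in
/-- Let `D` be a `(2,2)` digraph. If the underlying graph of `D` contains a hole `H`
of length at least `7`, then the subgraph of the phylogeny graph of `D` induced by
the vertex set of `H` is not chordal. -/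
theorem stmt_9 {V : Type*} [Fintype V] (A : V → V → Prop)
    (hD : IsIJDigraph 2 2 A)
    (v : V) (c : (underlyingGraph A).Walk v v)
    (hH : IsHole (underlyingGraph A) c) (hlen : 7 ≤ c.length) :
    ¬ IsChordal ((phylogenyGraph A).induce {x | x ∈ c.support}) := by
  intro hchordal
  set n := c.length with hn
  set N := n - 1 with hN
  set w : ℕ → V := fun i => c.getVert i with hw
  have hcyc := hH.1
  have hNn : N + 1 = n := by omega
  -- injectivity
  have hinj : ∀ i, i ≤ N → ∀ j, j ≤ N → w i = w j → i = j := by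
    intro i hi j hj hij
    exact cycle_getVert_inj hcyc (by omega) (by omega) hij
  -- hole edges
  have hadj : ∀ i, i < N → (underlyingGraph A).Adj (w i) (w (i+1)) := by
    intro i hi
    exact c.adj_getVert_succ (by omega)
  have hwrap : (underlyingGraph A).Adj (w N) (w 0) := by
    have h := c.adj_getVert_succ (show N < c.length by omega)
    have e1 : c.getVert (N + 1) = c.getVert 0 := by
      rw [hNn, show c.getVert n = v from c.getVert_length, c.getVert_zero]
    rw [e1] at h
    exact h
  -- membership
  have hmem : ∀ x, x ≤ N → w x ∈ c.support :=
    fun x hx => Walk.mem_support_iff_exists_getVert.mpr ⟨x, rfl, by omega⟩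
  -- inducedness
  have hind : ∀ i, i ≤ N → ∀ j, j ≤ N → (underlyingGraph A).Adj (w i) (w j) →
      j = i + 1 ∨ i = j + 1 ∨ (i = 0 ∧ j = N) ∨ (j = 0 ∧ i = N) := by
    intro i hi j hj hU
    have he := hH.2.2 _ (hmem i hi) _ (hmem j hj) hU
    obtain ⟨t, ht, hte⟩ := mem_edges_exists c he
    have htN : t ≤ N := by omega
    rw [Sym2.eq_iff] at hte
    rcases Nat.lt_or_ge (t+1) n with ht1 | ht1
    · -- t+1 ≤ N
      rcases hte with ⟨e1, e2⟩ | ⟨e1, e2⟩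
      · have hi' := hinj i hi t htN e1
        have hj' := hinj j hj (t+1) (by omega) e2
        omega
      · have hi' := hinj i hi (t+1) (by omega) e1
        have hj' := hinj j hj t htN e2
        omega
    · -- t + 1 = n, so getVert (t+1) = w 0 and t = N
      have htn : t = N := by omega
      have e0 : c.getVert (t+1) = w 0 := by
        rw [show t + 1 = n by omega, show c.getVert n = v from c.getVert_length]
        exact (c.getVert_zero).symm
      rcases hte with ⟨e1, e2⟩ | ⟨e1, e2⟩
      · rw [e0] at e2
        have hi' := hinj i hi t htN e1
        have hj' := hinj j hj 0 (by omega) e2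
        omega
      · rw [e0] at e1
        have hi' := hinj i hi 0 (by omega) e1
        have hj' := hinj j hj t htN e2
        omega
  -- the key property from chordality
  have key : ∀ (m : ℕ) (g : ℕ → ℕ), 4 ≤ m → (∀ i, i + 1 < m → g i < g (i+1)) →
      (∀ i, i < m → g i ≤ N) → (∀ i, i + 1 < m → adjP A w (g i) (g (i+1))) →
      adjP A w (g 0) (g (m-1)) →
      ∃ i j, i < m ∧ j < m ∧ i + 1 < j ∧ ¬(i = 0 ∧ j = m-1) ∧ adjP A w (g i) (g j) := by
    intro m g hm hmono hbd hadjg hclose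
    set g' : ℕ → ℕ := fun i => if i < m then g i else 0 with hg'def
    have hg' : ∀ i, i < m → g' i = g i := fun i hi => if_pos hi
    have hbd' : ∀ i, g' i ≤ N := by
      intro i
      by_cases h : i < m
      · rw [hg' i h]; exact hbd i h
      · simp only [hg'def, if_neg h]; omega
    set uu : ℕ → {x // x ∈ {x | x ∈ c.support}} :=
      fun i => ⟨w (g' i), hmem (g' i) (hbd' i)⟩ with huu
    have hres := key_of_chordal (G := (phylogenyGraph A).induce {x | x ∈ c.support})
      hchordal m uu hm
      (by
        intro i j hi hj hij
        have : w (g' i) = w (g' j) := congrArg Subtype.val hij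
        have := hinj _ (hbd' i) _ (hbd' j) this
        rw [hg' i hi, hg' j hj] at this
        by_contra hne
        rcases Nat.lt_or_ge i j with h' | h'
        · have := mono_of_succ hmono j hj i h'
          omega
        · have hji : j < i := by omega
          have := mono_of_succ hmono i hi j hji
          omega)
      (by
        intro i hi
        show (phylogenyGraph A).Adj (w (g' i)) (w (g' (i+1)))
        rw [hg' i (by omega), hg' (i+1) hi]
        exact hadjg i hi)
      (by
        show (phylogenyGraph A).Adj (w (g' (m-1))) (w (g' 0))
        rw [hg' (m-1) (by omega), hg' 0 (by omega)]
        exact (hclose).symm)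
    obtain ⟨i, j, hi, hj, hij, hne, hadj'⟩ := hres
    refine ⟨i, j, hi, hj, hij, hne, ?_⟩
    have : (phylogenyGraph A).Adj (w (g' i)) (w (g' j)) := hadj'
    rwa [hg' i hi, hg' j hj] at this
  -- build the context
  have C : Ctx V A w N :=
    { hfinV := Finite.of_fintype V
      hin := hD.2.1
      hout := hD.2.2
      hinj := hinj
      hadj := hadj
      hwrap := hwrap
      hind := hind
      hN := by omega
      key := key }
  rcases root C with ⟨u, hu⟩ | hwr
  · exact orient C hu
  · exact orientW C hwr
end

section
/- Let D be a (2,2) digraph whose phylogeny graph P(D) contains a hole H. If v is a vertex of D taking care of a cared edge lying on H, then v does not lie on H. -/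
section AuxLemmas

variable {V : Type*} {G : SimpleGraph V}

/-- In a path, an edge containing the first vertex must be the first edge. -/
lemma aux_path_edge_start {s t a : V} (p : G.Walk s t) (hp : p.IsPath)
    (he : s(a, s) ∈ p.edges) : a = p.getVert 1 := by
  induction p with
  | nil => simp at he
  | @cons s w t h q ih =>
    rw [SimpleGraph.Walk.edges_cons, List.mem_cons] at he
    rcases he with he | he
    · simp only [Sym2.eq, Sym2.rel_iff', Prod.mk.injEq, Prod.swap_prod_mk] at he
      rcases he with ⟨h1, h2⟩ | ⟨h1, h2⟩
      · exact absurd (h2 ▸ h) G.irrefl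
      · simpa [SimpleGraph.Walk.getVert_cons_succ] using h1
    · exact absurd (SimpleGraph.Walk.snd_mem_support_of_mem_edges q he)
        ((SimpleGraph.Walk.cons_isPath_iff h q).mp hp).2

/-- `getVert` is injective on `[0, length]` for a path. -/
lemma aux_getVert_injOn {s t : V} (p : G.Walk s t) (hp : p.IsPath) :
    Set.InjOn p.getVert {i | i ≤ p.length} := by
  induction p with
  | nil =>
    intro i hi j hj _
    simp only [Set.mem_setOf_eq, SimpleGraph.Walk.length_nil, Nat.le_zero] at hi hj
    omega
  | @cons s w t h q ih =>
    intro i hi j hj hij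
    simp only [Set.mem_setOf_eq, SimpleGraph.Walk.length_cons] at hi hj
    have hpath := (SimpleGraph.Walk.cons_isPath_iff h q).mp hp
    match i, j with
    | 0, 0 => rfl
    | 0, j + 1 =>
      exfalso
      rw [SimpleGraph.Walk.getVert_zero, SimpleGraph.Walk.getVert_cons_succ] at hij
      exact hpath.2 (SimpleGraph.Walk.mem_support_iff_exists_getVert.mpr
        ⟨j, hij.symm, by omega⟩)
    | i + 1, 0 =>
      exfalso
      rw [SimpleGraph.Walk.getVert_zero, SimpleGraph.Walk.getVert_cons_succ] at hij
      exact hpath.2 (SimpleGraph.Walk.mem_support_iff_exists_getVert.mpr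
        ⟨i, hij, by omega⟩)
    | i + 1, j + 1 =>
      rw [SimpleGraph.Walk.getVert_cons_succ, SimpleGraph.Walk.getVert_cons_succ] at hij
      have := ih hpath.1 (Set.mem_setOf_eq ▸ (by omega : i ≤ q.length))
        (Set.mem_setOf_eq ▸ (by omega : j ≤ q.length)) hij
      omega

/-- In a cycle based at `v`, a cycle edge containing `v` joins `v` to the second or
penultimate vertex. -/
lemma aux_cycle_nbr {v a : V} (c : G.Walk v v) (hc : c.IsCycle)
    (he : s(a, v) ∈ c.edges) : a = c.getVert 1 ∨ a = c.getVert (c.length - 1) := by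
  cases c with
  | nil => simp at he
  | @cons _ w _ h q =>
    have hq := (SimpleGraph.Walk.cons_isCycle_iff q h).mp hc
    have hql : 2 ≤ q.length := by
      have := hc.three_le_length
      simp only [SimpleGraph.Walk.length_cons] at this
      omega
    rw [SimpleGraph.Walk.edges_cons, List.mem_cons] at he
    rcases he with he | he
    · left
      simp only [Sym2.eq, Sym2.rel_iff', Prod.mk.injEq, Prod.swap_prod_mk] at he
      rcases he with ⟨h1, h2⟩ | ⟨h1, h2⟩
      · exact absurd (h2 ▸ h) G.irrefl
      · simpa [SimpleGraph.Walk.getVert_cons_succ] using h1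
    · right
      have he' : s(a, v) ∈ q.reverse.edges := by
        rw [SimpleGraph.Walk.edges_reverse, List.mem_reverse]; exact he
      have ha := aux_path_edge_start q.reverse hq.1.reverse he'
      rw [SimpleGraph.Walk.getVert_reverse] at ha
      rw [ha, SimpleGraph.Walk.length_cons, Nat.add_sub_cancel,
        SimpleGraph.Walk.getVert_cons q h (by omega)]

/-- A cycle of length at least 4 cannot contain all three edges of a triangle
through its base vertex. -/
lemma aux_no_triangle {v x y : V} (c : G.Walk v v) (hc : c.IsCycle) (hl : 4 ≤ c.length)
    (hx : s(x, v) ∈ c.edges) (hy : s(y, v) ∈ c.edges) (hxy : s(x, y) ∈ c.edges) : False := by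
  have hxne : x ≠ y := (c.adj_of_mem_edges hxy).ne
  have key : ∀ x y : V, s(x, v) ∈ c.edges → s(y, v) ∈ c.edges → s(x, y) ∈ c.edges →
      x = c.getVert 1 → y = c.getVert (c.length - 1) → False := by
    clear hx hy hxy hxne x y
    intro x y hx hy hxy hx1 hyl
    have hxv : x ≠ v := (c.adj_of_mem_edges hx).ne
    have hyv : y ≠ v := (c.adj_of_mem_edges hy).ne
    cases c with
    | nil => simp at hl
    | @cons _ w _ h q =>
      have hq := (SimpleGraph.Walk.cons_isCycle_iff q h).mp hc
      have hql : 3 ≤ q.length := by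
        simp only [SimpleGraph.Walk.length_cons] at hl
        omega
      have hxw : x = w := by
        simpa [SimpleGraph.Walk.getVert_cons_succ] using hx1
      have hxy' : s(x, y) ∈ q.edges := by
        rw [SimpleGraph.Walk.edges_cons, List.mem_cons] at hxy
        rcases hxy with he | he
        · exfalso
          simp only [Sym2.eq, Sym2.rel_iff', Prod.mk.injEq, Prod.swap_prod_mk] at he
          rcases he with ⟨h1, h2⟩ | ⟨h1, h2⟩
          · exact hxv h1
          · exact hyv h2
        · exact he
      have hyq : s(y, x) ∈ q.edges := by rwa [Sym2.eq_swap] at hxy'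
      rw [hxw] at hyq
      have hy1 : y = q.getVert 1 := aux_path_edge_start q hq.1 hyq
      have hyl' : y = q.getVert (q.length - 1) := by
        rw [hyl, SimpleGraph.Walk.length_cons, Nat.add_sub_cancel,
          SimpleGraph.Walk.getVert_cons q h (by omega)]
      have := aux_getVert_injOn q hq.1 (Set.mem_setOf_eq ▸ (by omega : 1 ≤ q.length))
        (Set.mem_setOf_eq ▸ (by omega : q.length - 1 ≤ q.length)) (hy1 ▸ hyl')
      omega
  rcases aux_cycle_nbr c hc hx with h1 | h1 <;> rcases aux_cycle_nbr c hc hy with h2 | h2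
  · exact hxne (h1.trans h2.symm)
  · exact key x y hx hy hxy h1 h2
  · exact key y x hy hx (Sym2.eq_swap ▸ hxy) h2 h1
  · exact hxne (h1.trans h2.symm)

end AuxLemmas

/-- Let `D` be a `(2,2)` digraph whose phylogeny graph contains a hole `H`.
If `v` is a vertex taking care of a cared edge lying on `H`, then `v` is not on `H`. -/
theorem stmt_11 {V : Type*} [Fintype V] (A : V → V → Prop)
    (hD : IsIJDigraph 2 2 A)
    (u : V) (c : (phylogenyGraph A).Walk u u) (hH : IsHole (phylogenyGraph A) c)
    (x y v : V) (hxy : s(x, y) ∈ c.edges) (hcared : CaredEdge A x y)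
    (hx : A x v) (hy : A y v) :
    v ∉ c.support := by
  classical
  intro hv
  have hxney : x ≠ y := hcared.1.1
  have hxv : x ≠ v := by
    rintro rfl
    exact hcared.2 ⟨hxney, Or.inr hy⟩
  have hyv : y ≠ v := by
    rintro rfl
    exact hcared.2 ⟨hxney, Or.inl hx⟩
  have hadjxv : (phylogenyGraph A).Adj x v := Or.inl ⟨hxv, Or.inl hx⟩
  have hadjyv : (phylogenyGraph A).Adj y v := Or.inl ⟨hyv, Or.inl hy⟩
  have hxs : x ∈ c.support := c.fst_mem_support_of_mem_edges hxy
  have hys : y ∈ c.support := c.snd_mem_support_of_mem_edges hxy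
  have h1 : s(x, v) ∈ c.edges := hH.2.2 x hxs v hv hadjxv
  have h2 : s(y, v) ∈ c.edges := hH.2.2 y hys v hv hadjyv
  have hperm := (c.rotate_edges v hv).perm
  have hc' : (c.rotate v hv).IsCycle := hH.1.rotate hv
  have hl' : 4 ≤ (c.rotate v hv).length := by
    rw [← SimpleGraph.Walk.length_edges, hperm.length_eq, SimpleGraph.Walk.length_edges]
    exact hH.2.1
  exact aux_no_triangle (c.rotate v hv) hc' hl' (hperm.mem_iff.mpr h1) (hperm.mem_iff.mpr h2)
    (hperm.mem_iff.mpr hxy)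
end

section
/- Let D be a (2,2) digraph whose phylogeny graph P(D) contains a hole H, and let W be a set extending H. Then no two vertices of W are adjacent in the underlying graph U(D) of D. -/
/-- Given a hole `c` in the phylogeny graph of a digraph with arc relation `A`,
a set `W` *extends* `c` if every element of `W` takes care of some cared edge of `c`
and every cared edge of `c` is taken care of by some element of `W`. -/
def ExtendingSet {V : Type*} (A : V → V → Prop) {v : V}
    (c : (phylogenyGraph A).Walk v v) (W : Set V) : Prop :=
  (∀ w ∈ W, ∃ x y : V, s(x, y) ∈ c.edges ∧ CaredEdge A x y ∧ A x w ∧ A y w) ∧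
  (∀ x y : V, s(x, y) ∈ c.edges → CaredEdge A x y → ∃ w ∈ W, A x w ∧ A y w)

private lemma endpoint_unique' {V : Type*} {G : SimpleGraph V} :
    ∀ {x y : V} (p : G.Walk x y), p.IsPath →
      ∀ z z', s(y, z) ∈ p.edges → s(y, z') ∈ p.edges → z = z' := by
  intro x y p
  induction p with
  | nil => simp
  | @cons x v y h r ih =>
    intro hp z z' hz hz'
    rw [SimpleGraph.Walk.cons_isPath_iff] at hp
    have hxy : x ≠ y := fun he => hp.2 (he ▸ r.end_mem_support)
    rw [SimpleGraph.Walk.edges_cons, List.mem_cons] at hz hz'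
    rcases hz with hz | hz
    · rw [Sym2.eq_iff] at hz
      rcases hz with ⟨h1, h2⟩ | ⟨h1, h2⟩
      · exact absurd h1 hxy.symm
      · subst h1
        have hrnil : r = SimpleGraph.Walk.nil := SimpleGraph.Walk.isPath_iff_eq_nil.mp hp.1
        rcases hz' with hz' | hz'
        · rw [Sym2.eq_iff] at hz'
          rcases hz' with ⟨h1', h2'⟩ | ⟨h1', h2'⟩
          · exact absurd h1' hxy.symm
          · rw [h2, h2']
        · rw [hrnil] at hz'; simp at hz'
    · rcases hz' with hz' | hz'
      · rw [Sym2.eq_iff] at hz'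
        rcases hz' with ⟨h1', h2'⟩ | ⟨h1', h2'⟩
        · exact absurd h1' hxy.symm
        · subst h1'
          have hrnil : r = SimpleGraph.Walk.nil := SimpleGraph.Walk.isPath_iff_eq_nil.mp hp.1
          rw [hrnil] at hz; simp at hz
      · exact ih hp.1 z z' hz hz'

private lemma triangle_aux {V : Type*} {G : SimpleGraph V} {a b d : V}
    (h : G.Adj a b) (q : G.Walk b a) (hq : q.IsPath) (had : a ≠ d) (hbd : b ≠ d)
    (h2 : s(a, d) ∈ (SimpleGraph.Walk.cons h q).edges)
    (h3 : s(b, d) ∈ (SimpleGraph.Walk.cons h q).edges) :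
    q.length = 2 := by
  rw [SimpleGraph.Walk.edges_cons, List.mem_cons] at h2 h3
  have h2' : s(a, d) ∈ q.edges := by
    rcases h2 with h2 | h2
    · rw [Sym2.eq_iff] at h2
      rcases h2 with ⟨h1', h2'⟩ | ⟨h1', h2'⟩
      · exact absurd h2'.symm hbd
      · exact absurd h1' h.ne
    · exact h2
  have h3' : s(b, d) ∈ q.edges := by
    rcases h3 with h3 | h3
    · rw [Sym2.eq_iff] at h3
      rcases h3 with ⟨h1', h2'⟩ | ⟨h1', h2'⟩
      · exact absurd h2'.symm hbd
      · exact absurd h2'.symm had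
    · exact h3
  clear h2 h3
  have hqnil : ¬ q.Nil := by
    intro hn
    rw [SimpleGraph.Walk.nil_iff_length_eq] at hn
    have hl := q.length_edges
    rw [hn, List.length_eq_zero_iff] at hl
    rw [hl] at h2'
    simp at h2'
  rw [SimpleGraph.Walk.not_nil_iff] at hqnil
  obtain ⟨w, h', r, rfl⟩ := hqnil
  rw [SimpleGraph.Walk.cons_isPath_iff] at hq
  rw [SimpleGraph.Walk.edges_cons, List.mem_cons] at h2' h3'
  have hwd : w = d := by
    rcases h3' with h3' | h3'
    · rw [Sym2.eq_iff] at h3'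
      rcases h3' with ⟨h1', h2'⟩ | ⟨h1', h2'⟩
      · exact h2'.symm
      · exact absurd h2'.symm hbd
    · exact absurd (r.fst_mem_support_of_mem_edges h3') hq.2
  subst hwd
  have h2'' : s(a, w) ∈ r.edges := by
    rcases h2' with h2' | h2'
    · rw [Sym2.eq_iff] at h2'
      rcases h2' with ⟨h1', _⟩ | ⟨h1', _⟩
      · exact absurd h1' h.ne
      · exact absurd h1' had
    · exact h2'
  have hrnil : ¬ r.Nil := by
    intro hn
    rw [SimpleGraph.Walk.nil_iff_length_eq] at hn
    have hl := r.length_edges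
    rw [hn, List.length_eq_zero_iff] at hl
    rw [hl] at h2''
    simp at h2''
  rw [SimpleGraph.Walk.not_nil_iff] at hrnil
  obtain ⟨z, h'', s, rfl⟩ := hrnil
  rw [SimpleGraph.Walk.cons_isPath_iff] at hq
  rw [SimpleGraph.Walk.edges_cons, List.mem_cons] at h2''
  have hza : z = a := by
    rcases h2'' with h2'' | h2''
    · rw [Sym2.eq_iff] at h2''
      rcases h2'' with ⟨h1', h2'⟩ | ⟨h1', _⟩
      · exact absurd h1' had
      · exact h1'.symm
    · exact absurd (s.snd_mem_support_of_mem_edges h2'') hq.1.2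
  subst hza
  have hsnil : s = SimpleGraph.Walk.nil := SimpleGraph.Walk.isPath_iff_eq_nil.mp hq.1.1
  rw [hsnil]
  simp

private lemma no_triangle_in_cycle {V : Type*} [DecidableEq V] {G : SimpleGraph V} {u a b d : V}
    (c : G.Walk u u) (hc : c.IsCycle) (hlen : 4 ≤ c.length)
    (hab : a ≠ b) (had : a ≠ d) (hbd : b ≠ d)
    (h1 : s(a, b) ∈ c.edges) (h2 : s(a, d) ∈ c.edges) (h3 : s(b, d) ∈ c.edges) :
    False := by
  have ha : a ∈ c.support := c.fst_mem_support_of_mem_edges h1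
  have hc' := hc.rotate ha
  have hperm := (c.rotate_edges a ha).perm
  have hlen' : (c.rotate a ha).length = c.length := by
    rw [← SimpleGraph.Walk.length_edges, ← SimpleGraph.Walk.length_edges, hperm.length_eq]
  have h1' : s(a, b) ∈ (c.rotate a ha).edges := hperm.mem_iff.mpr h1
  have h2' : s(a, d) ∈ (c.rotate a ha).edges := hperm.mem_iff.mpr h2
  have h3' : s(b, d) ∈ (c.rotate a ha).edges := hperm.mem_iff.mpr h3
  have hnn := hc'.not_nil
  rw [SimpleGraph.Walk.not_nil_iff] at hnn
  obtain ⟨v, h, q, hq⟩ := hnn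
  rw [hq] at hc' h1' h2' h3' hlen'
  rw [SimpleGraph.Walk.cons_isCycle_iff] at hc'
  have hbord : b = v ∨ d = v := by
    by_contra hcon
    push_neg at hcon
    have h1c := h1'
    rw [SimpleGraph.Walk.edges_cons, List.mem_cons] at h1c
    have hb : s(a, b) ∈ q.edges := by
      rcases h1c with hh | hh
      · rw [Sym2.eq_iff] at hh
        rcases hh with ⟨_, h2''⟩ | ⟨h1'', _⟩
        · exact absurd h2'' hcon.1
        · exact absurd h1'' h.ne
      · exact hh
    have h2c := h2'
    rw [SimpleGraph.Walk.edges_cons, List.mem_cons] at h2c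
    have hd : s(a, d) ∈ q.edges := by
      rcases h2c with hh | hh
      · rw [Sym2.eq_iff] at hh
        rcases hh with ⟨_, h2''⟩ | ⟨h1'', _⟩
        · exact absurd h2'' hcon.2
        · exact absurd h1'' h.ne
      · exact hh
    exact hbd (endpoint_unique' q hc'.1 b d hb hd)
  have hq3 : q.length = 2 := by
    rcases hbord with rfl | rfl
    · exact triangle_aux h q hc'.1 had hbd (by simpa using h2') (by simpa using h3')
    · exact triangle_aux h q hc'.1 hab hbd.symm (by simpa using h1')
        (by rw [Sym2.eq_swap] at h3'; simpa using h3')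
  rw [SimpleGraph.Walk.length_cons, hq3] at hlen'
  omega

private lemma main_aux {V : Type*} [Fintype V] (A : V → V → Prop)
    (hD : IsIJDigraph 2 2 A)
    (u : V) (c : (phylogenyGraph A).Walk u u) (hH : IsHole (phylogenyGraph A) c)
    (W : Set V) (hW : ExtendingSet A c W)
    (w₁ : V) (hw₁ : w₁ ∈ W) (w₂ : V) (hw₂ : w₂ ∈ W) (hA : A w₁ w₂) : False := by
  classical
  obtain ⟨x, y, hxy_e, hxy_c, hxw, hyw⟩ := hW.1 w₂ hw₂
  have hxyne : x ≠ y := hxy_c.1.1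
  have hw1xy : w₁ = x ∨ w₁ = y := by
    by_contra hcon
    push_neg at hcon
    have hsub : ({x, y, w₁} : Set V) ⊆ {z | A z w₂} := by
      intro z hz
      simp only [Set.mem_insert_iff, Set.mem_singleton_iff] at hz
      rcases hz with rfl | rfl | rfl
      · exact hxw
      · exact hyw
      · exact hA
    have hcard : ({x, y, w₁} : Set V).ncard = 3 := by
      rw [Set.ncard_insert_of_notMem (by simp [hxyne, hcon.1.symm]) (Set.toFinite _),
        Set.ncard_pair (by simp [hcon.2.symm] : y ≠ w₁)]
    have hle := Set.ncard_le_ncard hsub (Set.toFinite _)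
    rw [hcard] at hle
    have h2 := hD.2.1 w₂
    omega
  have hw1s : w₁ ∈ c.support := by
    rcases hw1xy with rfl | rfl
    · exact c.fst_mem_support_of_mem_edges hxy_e
    · exact c.snd_mem_support_of_mem_edges hxy_e
  obtain ⟨p, q, hpq_e, hpq_c, hpw, hqw⟩ := hW.1 w₁ hw₁
  have hpqne : p ≠ q := hpq_c.1.1
  have hpw1 : p ≠ w₁ := by
    rintro rfl
    exact hD.1 p (Relation.TransGen.single hpw)
  have hqw1 : q ≠ w₁ := by
    rintro rfl
    exact hD.1 q (Relation.TransGen.single hqw)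
  have hps : p ∈ c.support := c.fst_mem_support_of_mem_edges hpq_e
  have hqs : q ∈ c.support := c.snd_mem_support_of_mem_edges hpq_e
  have hadjp : (phylogenyGraph A).Adj p w₁ := by
    rw [phylogenyGraph, SimpleGraph.sup_adj]
    exact Or.inl ⟨hpw1, Or.inl hpw⟩
  have hadjq : (phylogenyGraph A).Adj q w₁ := by
    rw [phylogenyGraph, SimpleGraph.sup_adj]
    exact Or.inl ⟨hqw1, Or.inl hqw⟩
  have he1 : s(p, w₁) ∈ c.edges := hH.2.2 p hps w₁ hw1s hadjp
  have he2 : s(q, w₁) ∈ c.edges := hH.2.2 q hqs w₁ hw1s hadjq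
  exact no_triangle_in_cycle c hH.1 hH.2.1 hpw1.symm hqw1.symm hpqne
    (by rwa [Sym2.eq_swap]) (by rwa [Sym2.eq_swap]) hpq_e

/-- Let `D` be a `(2,2)` digraph whose phylogeny graph contains a hole `H`, and let
`W` be a set extending `H`. Then no two vertices of `W` are adjacent in the underlying
graph of `D`. -/
theorem stmt_12 {V : Type*} [Fintype V] (A : V → V → Prop)
    (hD : IsIJDigraph 2 2 A)
    (u : V) (c : (phylogenyGraph A).Walk u u) (hH : IsHole (phylogenyGraph A) c)
    (W : Set V) (hW : ExtendingSet A c W) :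
    ∀ w₁ ∈ W, ∀ w₂ ∈ W, ¬ (underlyingGraph A).Adj w₁ w₂ := by
  intro w₁ hw₁ w₂ hw₂ hadj
  obtain ⟨hne, hor⟩ := hadj
  rcases hor with h | h
  · exact main_aux A hD u c hH W hW w₁ hw₁ w₂ hw₂ h
  · exact main_aux A hD u c hH W hW w₂ hw₂ w₁ hw₁ h
end
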